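/- arXiv:2404.13703 — 5 statements merged into one kernel-verified Lean document; each statement's English description precedes it below -/
import Mathlib

section
/- Let (Q,Ñ) be a classical solution of the relaxed system on [0,T) with Q ∈ C²([0,T)×[0,1]). Define H(τ,η) := ∂_ηQ(τ,η) − K(Q(τ,η)). Then H ∈ C¹([0,T)×[0,1]) and H satisfies, in the classical sense: ∂_τH(τ,η) + ∂_ηH(τ,η) = K'(Q(τ,η))·(H(τ,η) − H(τ,1)) for τ ∈ (0,T), η ∈ (0,1); H(τ,0) = H(τ,1) for τ ∈ (0,T); and H(0,η) = Q_init'(η) − K(Q_init(η)) for η ∈ [0,1]. Moreover Ñ(τ) = H(τ,1) = H(τ,0) for all τ ∈ [0,T). -/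
open Real Set MeasureTheory Filter Topology
open scoped ENNReal

noncomputable section

/-- The time interval `[0, T)` in `ℝ`, where `T : ℝ≥0∞` may be `∞`. -/
def Ico0 (T : ℝ≥0∞) : Set ℝ := {τ : ℝ | 0 ≤ τ ∧ ENNReal.ofReal τ < T}

/-- Partial derivative in the time variable (one-sided at `τ = 0`). -/
def pdTau (Q : ℝ → ℝ → ℝ) (τ η : ℝ) : ℝ := derivWithin (fun s => Q s η) (Ici 0) τ

/-- Partial derivative in the spatial variable (one-sided at `η = 0` and `η = 1`). -/
def pdEta (Q : ℝ → ℝ → ℝ) (τ η : ℝ) : ℝ := derivWithin (fun x => Q τ x) (Icc 0 1) η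

/-- Assumption 1.1: `K ∈ C²(ℝ)` with `K'`, `K''` bounded on `ℝ` and `K > 0` on `[0, Φ_F]`. -/
structure KAssump (K : ℝ → ℝ) (ΦF : ℝ) : Prop where
  smooth : ContDiff ℝ 2 K
  bdd1 : ∃ C : ℝ, ∀ x : ℝ, |deriv K x| ≤ C
  bdd2 : ∃ C : ℝ, ∀ x : ℝ, |deriv (deriv K) x| ≤ C
  pos : ∀ φ ∈ Icc (0 : ℝ) ΦF, 0 < K φ

/-- `k_min := K'(0) + ∫₀^{Φ_F} min(K''(φ), 0) dφ`. -/
def kmin (K : ℝ → ℝ) (ΦF : ℝ) : ℝ :=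
  deriv K 0 + ∫ φ in (0 : ℝ)..ΦF, min (deriv (deriv K) φ) 0

/-- `k_max := K'(0) + ∫₀^{Φ_F} max(K''(φ), 0) dφ`. -/
def kmax (K : ℝ → ℝ) (ΦF : ℝ) : ℝ :=
  deriv K 0 + ∫ φ in (0 : ℝ)..ΦF, max (deriv (deriv K) φ) 0

/-- Assumption (A2) on the initial datum. -/
structure A2 (K : ℝ → ℝ) (ΦF : ℝ) (Qinit : ℝ → ℝ) : Prop where
  reg : ContDiffOn ℝ 1 Qinit (Icc 0 1)
  mono : MonotoneOn Qinit (Icc 0 1)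
  init0 : Qinit 0 = 0
  init1 : Qinit 1 = ΦF
  deriv1 : K ΦF < derivWithin Qinit (Icc 0 1) 1
  compat : derivWithin Qinit (Icc 0 1) 1 - derivWithin Qinit (Icc 0 1) 0 = K ΦF - K 0

/-- A classical solution `(Q, N)` of the Q-system on `[0, T)` with initial datum `Qinit`. -/
structure IsQSol (K : ℝ → ℝ) (ΦF : ℝ) (T : ℝ≥0∞) (Qinit : ℝ → ℝ)
    (Q : ℝ → ℝ → ℝ) (N : ℝ → ℝ) : Prop where
  initReg : ContDiffOn ℝ 1 Qinit (Icc 0 1)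
  initMono : MonotoneOn Qinit (Icc 0 1)
  init0 : Qinit 0 = 0
  init1 : Qinit 1 = ΦF
  initDeriv : K ΦF < derivWithin Qinit (Icc 0 1) 1
  reg : ContDiffOn ℝ 1 (Function.uncurry Q) (Ico0 T ×ˢ Icc (0 : ℝ) 1)
  mono : ∀ τ ∈ Ico0 T, MonotoneOn (Q τ) (Icc 0 1)
  Ncont : ContinuousOn N (Ico0 T)
  Npos : ∀ τ ∈ Ico0 T, 0 < N τ
  pde : ∀ τ ∈ Ico0 T, ∀ η ∈ Ioo (0 : ℝ) 1,
    pdTau Q τ η + pdEta Q τ η = 1 / N τ + K (Q τ η)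
  bc : ∀ τ ∈ Ico0 T, Q τ 0 = 0
  Ndef : ∀ τ ∈ Ico0 T, 1 / N τ = pdEta Q τ 1 - K ΦF
  init : ∀ η ∈ Icc (0 : ℝ) 1, Q 0 η = Qinit η
  constraint : ∀ τ ∈ Ico0 T, K ΦF < pdEta Q τ 1

/-- A classical solution `(Q, Ñ)` of the relaxed system on `[0, T)` with initial datum `Qinit`,
where `Ñ` is unconstrained in sign. -/
structure IsRelaxedSol (K : ℝ → ℝ) (ΦF : ℝ) (T : ℝ≥0∞) (Qinit : ℝ → ℝ)
    (Q : ℝ → ℝ → ℝ) (Ntil : ℝ → ℝ) : Prop where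
  initReg : ContDiffOn ℝ 1 Qinit (Icc 0 1)
  init0 : Qinit 0 = 0
  init1 : Qinit 1 = ΦF
  reg : ContDiffOn ℝ 1 (Function.uncurry Q) (Ico0 T ×ˢ Icc (0 : ℝ) 1)
  Ncont : ContinuousOn Ntil (Ico0 T)
  pde : ∀ τ ∈ Ico0 T, ∀ η ∈ Ioo (0 : ℝ) 1,
    pdTau Q τ η + pdEta Q τ η = Ntil τ + K (Q τ η)
  bc : ∀ τ ∈ Ico0 T, Q τ 0 = 0
  Ndef : ∀ τ ∈ Ico0 T, Ntil τ = pdEta Q τ 1 - K ΦF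
  init : ∀ η ∈ Icc (0 : ℝ) 1, Q 0 η = Qinit η

/-- A steady state `(Q*, N*)` of the Q-system. -/
def IsSteadyState (K : ℝ → ℝ) (ΦF : ℝ) (Qs : ℝ → ℝ) (Ns : ℝ) : Prop :=
  ContDiffOn ℝ 1 Qs (Icc 0 1) ∧ 0 < Ns ∧
    (∀ η ∈ Icc (0 : ℝ) 1, derivWithin Qs (Icc 0 1) η = K (Qs η) + 1 / Ns) ∧
    Qs 0 = 0 ∧ Qs 1 = ΦF

/-- `P₀ f := f - ∫₀¹ f`. -/
def P0 (f : ℝ → ℝ) (η : ℝ) : ℝ := f η - ∫ x in (0 : ℝ)..1, f x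

/-- `H_init := Q_init' - K ∘ Q_init` (derivative within `[0,1]`). -/
def Hinit (K : ℝ → ℝ) (Qinit : ℝ → ℝ) (η : ℝ) : ℝ :=
  derivWithin Qinit (Icc 0 1) η - K (Qinit η)


/-- Two functions continuous on `[0,1]` that agree on `(0,1)` agree on `[0,1]`. -/
lemma stmt11_aux_eqOn_Icc {f g : ℝ → ℝ} (hf : ContinuousOn f (Icc 0 1))
    (hg : ContinuousOn g (Icc 0 1)) (h : ∀ x ∈ Ioo (0:ℝ) 1, f x = g x) :
    ∀ x ∈ Icc (0:ℝ) 1, f x = g x := by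
  intro x hx
  have hcl : x ∈ closure (Ioo (0:ℝ) 1) := by
    rw [closure_Ioo (by norm_num : (0:ℝ) ≠ 1)]; exact hx
  have hne : (𝓝[Ioo (0:ℝ) 1] x).NeBot := mem_closure_iff_nhdsWithin_neBot.1 hcl
  have h1 : Tendsto f (𝓝[Ioo (0:ℝ) 1] x) (𝓝 (f x)) :=
    (hf x hx).mono_left (nhdsWithin_mono x Ioo_subset_Icc_self)
  have h2 : Tendsto g (𝓝[Ioo (0:ℝ) 1] x) (𝓝 (g x)) :=
    (hg x hx).mono_left (nhdsWithin_mono x Ioo_subset_Icc_self)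
  have h3 : Tendsto f (𝓝[Ioo (0:ℝ) 1] x) (𝓝 (g x)) :=
    h2.congr' (eventually_nhdsWithin_of_forall fun y hy => (h y hy).symm)
  exact tendsto_nhds_unique h1 h3
/-- Proposition 5.2: the equation satisfied by the auxiliary quantity
`H = ∂_ηQ - K(Q)` for a `C²` classical solution of the relaxed system. -/
theorem stmt11 (ΦF : ℝ) (hΦF : 0 < ΦF) (K : ℝ → ℝ) (hK : KAssump K ΦF)
    (T : ℝ≥0∞) (hT : 0 < T) (Qinit : ℝ → ℝ) (Q : ℝ → ℝ → ℝ) (Ntil : ℝ → ℝ)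
    (hsol : IsRelaxedSol K ΦF T Qinit Q Ntil)
    (hreg2 : ContDiffOn ℝ 2 (Function.uncurry Q) (Ico0 T ×ˢ Icc (0 : ℝ) 1))
    (H : ℝ → ℝ → ℝ) (hH : ∀ τ η : ℝ, H τ η = pdEta Q τ η - K (Q τ η)) :
    ContDiffOn ℝ 1 (Function.uncurry H) (Ico0 T ×ˢ Icc (0 : ℝ) 1) ∧
    (∀ τ ∈ Ico0 T, 0 < τ → ∀ η ∈ Ioo (0 : ℝ) 1,
      pdTau H τ η + pdEta H τ η = deriv K (Q τ η) * (H τ η - H τ 1)) ∧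
    (∀ τ ∈ Ico0 T, 0 < τ → H τ 0 = H τ 1) ∧
    (∀ η ∈ Icc (0 : ℝ) 1, H 0 η = derivWithin Qinit (Icc 0 1) η - K (Qinit η)) ∧
    (∀ τ ∈ Ico0 T, Ntil τ = H τ 1 ∧ H τ 1 = H τ 0) := by
  classical
  set S : Set (ℝ × ℝ) := Ico0 T ×ˢ Icc (0:ℝ) 1 with hSdef
  set G : ℝ × ℝ → ℝ := Function.uncurry Q with hGdef
  set O : Set ℝ := {τ : ℝ | ENNReal.ofReal τ < T} with hOdef
  have hO : IsOpen O := isOpen_Iio.preimage ENNReal.continuous_ofReal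
  have hIeq : Ico0 T = Ici 0 ∩ O := by
    ext x; simp [Ico0, hOdef, and_comm]
  have h0mem : (0:ℝ) ∈ Ico0 T := ⟨le_refl 0, by simpa using hT⟩
  have hconv : Convex ℝ (Ico0 T) := by
    rw [convex_iff_ordConnected]
    exact ⟨fun a ha b hb x hx =>
      ⟨le_trans ha.1 hx.1, lt_of_le_of_lt (ENNReal.ofReal_le_ofReal hx.2) hb.2⟩⟩
  obtain ⟨ε, hε, hεT⟩ : ∃ ε : ℝ, 0 < ε ∧ ENNReal.ofReal ε < T := by
    rcases eq_or_ne T ∞ with h | h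
    · exact ⟨1, one_pos, by simp [h]⟩
    · have htr : 0 < T.toReal := ENNReal.toReal_pos hT.ne' h
      refine ⟨T.toReal / 2, by linarith, ?_⟩
      rw [ENNReal.ofReal_lt_iff_lt_toReal (by linarith) h]
      linarith
  have hsubε : Ioo 0 ε ⊆ Ico0 T := fun x hx =>
    ⟨hx.1.le, lt_of_le_of_lt (ENNReal.ofReal_le_ofReal hx.2.le) hεT⟩
  have hint : (interior (Ico0 T)).Nonempty :=
    ⟨ε / 2, interior_maximal hsubε isOpen_Ioo ⟨half_pos hε, half_lt_self hε⟩⟩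
  have hUDI : UniqueDiffOn ℝ (Ico0 T) := uniqueDiffOn_convex hconv hint
  have hUDS : UniqueDiffOn ℝ S := hUDI.prod (uniqueDiffOn_Icc zero_lt_one)
  set F : ℝ × ℝ → (ℝ × ℝ →L[ℝ] ℝ) := fderivWithin ℝ G S with hFdef
  have hF1 : ContDiffOn ℝ 1 F S := hreg2.fderivWithin hUDS (by norm_num)
  have hGdiff : ∀ p ∈ S, HasFDerivWithinAt G (F p) S p := fun p hp =>
    ((hreg2.differentiableOn (by norm_num)) p hp).hasFDerivWithinAt
  -- `pdEta` in terms of `F`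
  have hEta : ∀ τ ∈ Ico0 T, ∀ η ∈ Icc (0:ℝ) 1,
      pdEta Q τ η = F (τ, η) ((0:ℝ), (1:ℝ)) := by
    intro τ hτ η hη
    have hι : HasDerivWithinAt (fun x : ℝ => ((τ, x) : ℝ × ℝ)) ((0:ℝ), (1:ℝ)) (Icc 0 1) η :=
      ((hasDerivAt_const η τ).prodMk (hasDerivAt_id η)).hasDerivWithinAt
    have hmaps : MapsTo (fun x : ℝ => ((τ, x) : ℝ × ℝ)) (Icc 0 1) S := fun x hx => ⟨hτ, hx⟩
    have hcomp := (hGdiff (τ, η) ⟨hτ, hη⟩).comp_hasDerivWithinAt η hι hmaps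
    exact hcomp.derivWithin (uniqueDiffOn_Icc zero_lt_one η hη)
  have hTauW : ∀ τ ∈ Ico0 T, ∀ η : ℝ,
      pdTau Q τ η = derivWithin (fun s => Q s η) (Ico0 T) τ := by
    intro τ hτ η
    rw [pdTau, hIeq, derivWithin_inter (hO.mem_nhds hτ.2)]
  have hTau : ∀ τ ∈ Ico0 T, ∀ η ∈ Icc (0:ℝ) 1,
      pdTau Q τ η = F (τ, η) ((1:ℝ), (0:ℝ)) := by
    intro τ hτ η hη
    rw [hTauW τ hτ η]
    have hι : HasDerivWithinAt (fun s : ℝ => ((s, η) : ℝ × ℝ)) ((1:ℝ), (0:ℝ)) (Ico0 T) τ :=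
      ((hasDerivAt_id τ).prodMk (hasDerivAt_const τ η)).hasDerivWithinAt
    have hmaps : MapsTo (fun s : ℝ => ((s, η) : ℝ × ℝ)) (Ico0 T) S := fun s hs => ⟨hs, hη⟩
    have hcomp := (hGdiff (τ, η) ⟨hτ, hη⟩).comp_hasDerivWithinAt τ hι hmaps
    exact hcomp.derivWithin (hUDI τ hτ)
  -- regularity of H
  have hKG : ContDiffOn ℝ 1 (fun p : ℝ × ℝ => K (G p)) S :=
    (hK.smooth.of_le one_le_two).comp_contDiffOn (hreg2.of_le one_le_two)
  have hA1 : ContDiffOn ℝ 1 (fun p : ℝ × ℝ => F p ((0:ℝ), (1:ℝ))) S :=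
    hF1.clm_apply contDiffOn_const
  have hB1 : ContDiffOn ℝ 1 (fun p : ℝ × ℝ => F p ((1:ℝ), (0:ℝ))) S :=
    hF1.clm_apply contDiffOn_const
  have hHeqS : ∀ p ∈ S, Function.uncurry H p = F p ((0:ℝ), (1:ℝ)) - K (G p) := by
    rintro ⟨τ, η⟩ hp
    show H τ η = _
    rw [hH, hEta τ hp.1 η hp.2]
    rfl
  have hHreg : ContDiffOn ℝ 1 (Function.uncurry H) S :=
    (hA1.sub hKG).congr hHeqS
  -- slice continuity helper
  have slicecont : ∀ f : ℝ × ℝ → ℝ, ContinuousOn f S → ∀ τ ∈ Ico0 T,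
      ContinuousOn (fun x => f (τ, x)) (Icc 0 1) := by
    intro f hf τ hτ
    exact hf.comp ((continuous_const.prodMk continuous_id).continuousOn)
      (fun x hx => ⟨hτ, hx⟩)
  -- the PDE extends to the closed interval in η
  have hpdeS : ∀ τ ∈ Ico0 T, ∀ η ∈ Icc (0:ℝ) 1,
      F (τ, η) ((1:ℝ), (0:ℝ)) + F (τ, η) ((0:ℝ), (1:ℝ)) = Ntil τ + K (Q τ η) := by
    intro τ hτ
    have hc1 : ContinuousOn (fun x => F (τ, x) ((1:ℝ),(0:ℝ)) + F (τ, x) ((0:ℝ),(1:ℝ))) (Icc 0 1) := by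
      have := (slicecont _ hB1.continuousOn τ hτ).add (slicecont _ hA1.continuousOn τ hτ)
      exact this
    have hc2 : ContinuousOn (fun x : ℝ => Ntil τ + K (Q τ x)) (Icc 0 1) := by
      have := slicecont _ hKG.continuousOn τ hτ
      exact continuousOn_const.add this
    refine stmt11_aux_eqOn_Icc hc1 hc2 ?_
    intro η hη
    rw [← hTau τ hτ η (Ioo_subset_Icc_self hη), ← hEta τ hτ η (Ioo_subset_Icc_self hη)]
    exact hsol.pde τ hτ η hη
  -- pdTau Q at η = 0 vanishes
  have hTau0 : ∀ τ ∈ Ico0 T, pdTau Q τ 0 = 0 := by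
    intro τ hτ
    rw [hTauW τ hτ 0]
    have hcongr : derivWithin (fun s => Q s 0) (Ico0 T) τ
        = derivWithin (fun _ : ℝ => (0:ℝ)) (Ico0 T) τ :=
      derivWithin_congr (fun s hs => hsol.bc s hs) (hsol.bc τ hτ)
    rw [hcongr]
    exact (hasDerivWithinAt_const τ _ (0:ℝ)).derivWithin (hUDI τ hτ)
  -- H τ 0 = Ntil τ
  have hH0 : ∀ τ ∈ Ico0 T, H τ 0 = Ntil τ := by
    intro τ hτ
    have h01 : (0:ℝ) ∈ Icc (0:ℝ) 1 := ⟨le_refl 0, zero_le_one⟩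
    have hp := hpdeS τ hτ 0 h01
    have hB0 : F (τ, 0) ((1:ℝ),(0:ℝ)) = 0 := by rw [← hTau τ hτ 0 h01]; exact hTau0 τ hτ
    rw [hB0, zero_add] at hp
    rw [hH, hEta τ hτ 0 h01, hp, hsol.bc τ hτ]
    ring
  -- Q τ 1 = ΦF via ODE uniqueness
  have hQ1 : ∀ τ ∈ Ico0 T, Q τ 1 = ΦF := by
    obtain ⟨C, hC⟩ := hK.bdd1
    have hKdiff : Differentiable ℝ K := hK.smooth.differentiable (by norm_num)
    have hlipK : LipschitzWith C.toNNReal K := by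
      apply lipschitzWith_of_nnnorm_deriv_le hKdiff
      intro x
      rw [← NNReal.coe_le_coe, coe_nnnorm, Real.norm_eq_abs, Real.coe_toNNReal']
      exact le_max_of_le_left (hC x)
    have hlip : ∀ t : ℝ, LipschitzWith C.toNNReal (fun x : ℝ => K x - K ΦF) := by
      intro t a b
      have h1 : edist (K a - K ΦF) (K b - K ΦF) = edist (K a) (K b) := by
        simp [edist_dist, dist_eq, sub_sub_sub_cancel_right]
      calc edist (K a - K ΦF) (K b - K ΦF) = edist (K a) (K b) := h1
        _ ≤ C.toNNReal * edist a b := hlipK a b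
    have h11 : (1:ℝ) ∈ Icc (0:ℝ) 1 := ⟨zero_le_one, le_rfl⟩
    have hgc : ContinuousOn (fun s => Q s 1) (Ico0 T) :=
      hreg2.continuousOn.comp ((continuous_id.prodMk continuous_const).continuousOn)
        (fun s hs => ⟨hs, h11⟩)
    have hgd : ∀ t ∈ Ico0 T, HasDerivWithinAt (fun s => Q s 1)
        (K (Q t 1) - K ΦF) (Ico0 T) t := by
      intro t ht
      have hι : HasDerivWithinAt (fun s : ℝ => ((s, (1:ℝ)) : ℝ × ℝ)) ((1:ℝ),(0:ℝ)) (Ico0 T) t :=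
        ((hasDerivAt_id t).prodMk (hasDerivAt_const t (1:ℝ))).hasDerivWithinAt
      have hmaps : MapsTo (fun s : ℝ => ((s, (1:ℝ)) : ℝ × ℝ)) (Ico0 T) S := fun s hs => ⟨hs, h11⟩
      have hcomp := (hGdiff (t, 1) ⟨ht, h11⟩).comp_hasDerivWithinAt t hι hmaps
      have hval : F (t, 1) ((1:ℝ),(0:ℝ)) = K (Q t 1) - K ΦF := by
        have hp := hpdeS t ht 1 h11
        have hN := hsol.Ndef t ht
        rw [hEta t ht 1 h11] at hN
        linarith
      exact hval ▸ hcomp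
    intro τ hτ
    have hsub2 : Icc (0:ℝ) τ ⊆ Ico0 T := fun t ht =>
      ⟨ht.1, lt_of_le_of_lt (ENNReal.ofReal_le_ofReal ht.2) hτ.2⟩
    have hderiv' : ∀ t ∈ Ico (0:ℝ) τ, HasDerivWithinAt (fun s => Q s 1)
        ((fun _ x => K x - K ΦF) t ((fun s => Q s 1) t)) (Ici t) t := by
      intro t ht
      have htm : t ∈ Ico0 T := hsub2 ⟨ht.1, ht.2.le⟩
      have h1 := hgd t htm
      rw [hIeq] at h1
      exact ((hasDerivWithinAt_inter (hO.mem_nhds htm.2)).1 h1).mono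
        (Ici_subset_Ici.2 ht.1)
    have hconst : ∀ t ∈ Ico (0:ℝ) τ, HasDerivWithinAt (fun _ : ℝ => ΦF)
        ((fun _ x => K x - K ΦF) t ((fun _ : ℝ => ΦF) t)) (Ici t) t := by
      intro t _
      simpa using hasDerivWithinAt_const t (Ici t) ΦF
    have key := ODE_solution_unique (v := fun _ x => K x - K ΦF) hlip
      (hgc.mono hsub2) hderiv' continuousOn_const hconst
      (show Q 0 1 = ΦF by rw [hsol.init 1 h11, hsol.init1])
    exact key ⟨hτ.1, le_rfl⟩
  -- H τ 1 = Ntil τ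
  have hH1 : ∀ τ ∈ Ico0 T, H τ 1 = Ntil τ := by
    intro τ hτ
    have h11 : (1:ℝ) ∈ Icc (0:ℝ) 1 := ⟨zero_le_one, le_refl 1⟩
    rw [hH, hEta τ hτ 1 h11, hQ1 τ hτ]
    have := hsol.Ndef τ hτ
    rw [hEta τ hτ 1 h11] at this
    linarith
  refine ⟨hHreg, ?_, ?_, ?_, fun τ hτ => ⟨(hH1 τ hτ).symm, (hH1 τ hτ).trans (hH0 τ hτ).symm⟩⟩
  · -- interior PDE
    intro τ hτ hτpos η hη
    have hOτ : τ ∈ O := hτ.2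
    have hUopen : IsOpen ((O ∩ Ioi (0:ℝ)) ×ˢ Ioo (0:ℝ) 1) :=
      (hO.inter isOpen_Ioi).prod isOpen_Ioo
    have hUS : (O ∩ Ioi (0:ℝ)) ×ˢ Ioo (0:ℝ) 1 ⊆ S := fun q hq =>
      ⟨⟨le_of_lt hq.1.2, hq.1.1⟩, Ioo_subset_Icc_self hq.2⟩
    have hpU : ((τ, η) : ℝ × ℝ) ∈ (O ∩ Ioi (0:ℝ)) ×ˢ Ioo (0:ℝ) 1 := ⟨⟨hOτ, hτpos⟩, hη⟩
    have hSnhds : ∀ q ∈ (O ∩ Ioi (0:ℝ)) ×ˢ Ioo (0:ℝ) 1, S ∈ 𝓝 q := fun q hq =>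
      mem_of_superset (hUopen.mem_nhds hq) hUS
    have hG2 : ContDiffAt ℝ 2 G (τ, η) := hreg2.contDiffAt (hSnhds _ hpU)
    set L : ℝ × ℝ →L[ℝ] ℝ := fderiv ℝ G (τ, η) with hLdef
    set M : ℝ × ℝ →L[ℝ] (ℝ × ℝ →L[ℝ] ℝ) := fderiv ℝ (fderiv ℝ G) (τ, η) with hMdef
    have hL : HasFDerivAt G L (τ, η) := (hG2.differentiableAt (by norm_num)).hasFDerivAt
    have hMc : HasFDerivAt (fderiv ℝ G) M (τ, η) :=
      (((hG2.fderiv_right (m := 1) (by norm_num)).differentiableAt (by norm_num))).hasFDerivAt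
    -- pointwise identities on the open neighborhood
    have hFq : ∀ q ∈ (O ∩ Ioi (0:ℝ)) ×ˢ Ioo (0:ℝ) 1, F q = fderiv ℝ G q := fun q hq =>
      fderivWithin_of_mem_nhds (hSnhds q hq)
    have hHq : ∀ q ∈ (O ∩ Ioi (0:ℝ)) ×ˢ Ioo (0:ℝ) 1,
        H q.1 q.2 = fderiv ℝ G q ((0:ℝ),(1:ℝ)) - K (G q) := by
      rintro ⟨a, b⟩ hq
      have hqS := hUS hq
      rw [hH, hEta a hqS.1 b hqS.2, hFq _ hq]
      rfl
    have hPq : ∀ q ∈ (O ∩ Ioi (0:ℝ)) ×ˢ Ioo (0:ℝ) 1,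
        fderiv ℝ G q ((1:ℝ),(0:ℝ)) + fderiv ℝ G q ((0:ℝ),(1:ℝ)) = Ntil q.1 + K (G q) := by
      rintro ⟨a, b⟩ hq
      have hqS := hUS hq
      rw [← hFq _ hq]
      exact hpdeS a hqS.1 b hqS.2
    -- slices
    have hslice1 : HasDerivAt (fun s : ℝ => ((s, η) : ℝ × ℝ)) ((1:ℝ),(0:ℝ)) τ :=
      (hasDerivAt_id τ).prodMk (hasDerivAt_const τ η)
    have hslice2 : HasDerivAt (fun x : ℝ => ((τ, x) : ℝ × ℝ)) ((0:ℝ),(1:ℝ)) η :=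
      (hasDerivAt_const η τ).prodMk (hasDerivAt_id η)
    have hKd : HasDerivAt K (deriv K (G (τ, η))) (G (τ, η)) :=
      ((hK.smooth.differentiable (by norm_num)) (G (τ, η))).hasDerivAt
    -- τ-direction
    have hFt : HasDerivAt (fun s => fderiv ℝ G (s, η)) (M ((1:ℝ),(0:ℝ))) τ :=
      hMc.comp_hasDerivAt τ hslice1
    have hD2t : HasDerivAt (fun s => fderiv ℝ G (s, η) ((0:ℝ),(1:ℝ)))
        (M ((1:ℝ),(0:ℝ)) ((0:ℝ),(1:ℝ))) τ := by
      simpa using hFt.clm_apply (hasDerivAt_const τ (((0:ℝ),(1:ℝ)) : ℝ × ℝ))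
    have hQt : HasDerivAt (fun s => G (s, η)) (L ((1:ℝ),(0:ℝ))) τ :=
      by have h := hL.comp_hasDerivAt τ hslice1; exact h
    have hKQt : HasDerivAt (fun s => K (G (s, η)))
        (deriv K (G (τ, η)) * L ((1:ℝ),(0:ℝ))) τ := hKd.comp τ hQt
    have hev1 : (fun s => H s η) =ᶠ[𝓝 τ]
        fun s => fderiv ℝ G (s, η) ((0:ℝ),(1:ℝ)) - K (G (s, η)) := by
      filter_upwards [(hO.inter isOpen_Ioi).mem_nhds ⟨hOτ, hτpos⟩] with s hs
      exact hHq (s, η) ⟨hs, hη⟩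
    have hHt : HasDerivAt (fun s => H s η)
        (M ((1:ℝ),(0:ℝ)) ((0:ℝ),(1:ℝ)) - deriv K (G (τ, η)) * L ((1:ℝ),(0:ℝ))) τ :=
      (hD2t.sub hKQt).congr_of_eventuallyEq hev1
    -- η-direction
    have hFe : HasDerivAt (fun x => fderiv ℝ G (τ, x)) (M ((0:ℝ),(1:ℝ))) η :=
      hMc.comp_hasDerivAt η hslice2
    have hD2e : HasDerivAt (fun x => fderiv ℝ G (τ, x) ((0:ℝ),(1:ℝ)))
        (M ((0:ℝ),(1:ℝ)) ((0:ℝ),(1:ℝ))) η := by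
      simpa using hFe.clm_apply (hasDerivAt_const η (((0:ℝ),(1:ℝ)) : ℝ × ℝ))
    have hD1e : HasDerivAt (fun x => fderiv ℝ G (τ, x) ((1:ℝ),(0:ℝ)))
        (M ((0:ℝ),(1:ℝ)) ((1:ℝ),(0:ℝ))) η := by
      simpa using hFe.clm_apply (hasDerivAt_const η (((1:ℝ),(0:ℝ)) : ℝ × ℝ))
    have hQe : HasDerivAt (fun x => G (τ, x)) (L ((0:ℝ),(1:ℝ))) η :=
      by have h := hL.comp_hasDerivAt η hslice2; exact h
    have hKQe : HasDerivAt (fun x => K (G (τ, x)))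
        (deriv K (G (τ, η)) * L ((0:ℝ),(1:ℝ))) η := hKd.comp η hQe
    have hev2 : (fun x => H τ x) =ᶠ[𝓝 η]
        fun x => fderiv ℝ G (τ, x) ((0:ℝ),(1:ℝ)) - K (G (τ, x)) := by
      filter_upwards [isOpen_Ioo.mem_nhds hη] with x hx
      exact hHq (τ, x) ⟨⟨hOτ, hτpos⟩, hx⟩
    have hHe : HasDerivAt (fun x => H τ x)
        (M ((0:ℝ),(1:ℝ)) ((0:ℝ),(1:ℝ)) - deriv K (G (τ, η)) * L ((0:ℝ),(1:ℝ))) η :=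
      (hD2e.sub hKQe).congr_of_eventuallyEq hev2
    -- differentiate the PDE in η
    have hev3 : (fun x => Ntil τ + K (G (τ, x))) =ᶠ[𝓝 η]
        fun x => fderiv ℝ G (τ, x) ((1:ℝ),(0:ℝ)) + fderiv ℝ G (τ, x) ((0:ℝ),(1:ℝ)) := by
      filter_upwards [isOpen_Ioo.mem_nhds hη] with x hx
      exact (hPq (τ, x) ⟨⟨hOτ, hτpos⟩, hx⟩).symm
    have hsum : HasDerivAt
        (fun x => fderiv ℝ G (τ, x) ((1:ℝ),(0:ℝ)) + fderiv ℝ G (τ, x) ((0:ℝ),(1:ℝ)))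
        (M ((0:ℝ),(1:ℝ)) ((1:ℝ),(0:ℝ)) + M ((0:ℝ),(1:ℝ)) ((0:ℝ),(1:ℝ))) η :=
      hD1e.add hD2e
    have hsum' : HasDerivAt
        (fun x => fderiv ℝ G (τ, x) ((1:ℝ),(0:ℝ)) + fderiv ℝ G (τ, x) ((0:ℝ),(1:ℝ)))
        (deriv K (G (τ, η)) * L ((0:ℝ),(1:ℝ))) η :=
      by simpa using ((hasDerivAt_const η (Ntil τ)).add hKQe).congr_of_eventuallyEq hev3.symm
    have heq2 : M ((0:ℝ),(1:ℝ)) ((1:ℝ),(0:ℝ)) + M ((0:ℝ),(1:ℝ)) ((0:ℝ),(1:ℝ))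
        = deriv K (G (τ, η)) * L ((0:ℝ),(1:ℝ)) := hsum.unique hsum'
    -- symmetry of the second derivative
    have hsym : M ((1:ℝ),(0:ℝ)) ((0:ℝ),(1:ℝ)) = M ((0:ℝ),(1:ℝ)) ((1:ℝ),(0:ℝ)) :=
      (hG2.isSymmSndFDerivAt (by norm_num)) _ _
    -- assemble
    have hTH : pdTau H τ η
        = M ((1:ℝ),(0:ℝ)) ((0:ℝ),(1:ℝ)) - deriv K (G (τ, η)) * L ((1:ℝ),(0:ℝ)) := by
      rw [pdTau, derivWithin_of_mem_nhds (Ici_mem_nhds hτpos)]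
      exact hHt.deriv
    have hEH : pdEta H τ η
        = M ((0:ℝ),(1:ℝ)) ((0:ℝ),(1:ℝ)) - deriv K (G (τ, η)) * L ((0:ℝ),(1:ℝ)) := by
      rw [pdEta, derivWithin_of_mem_nhds (Icc_mem_nhds hη.1 hη.2)]
      exact hHe.deriv
    have hHval : H τ η = L ((0:ℝ),(1:ℝ)) - K (G (τ, η)) := hHq (τ, η) hpU
    have hPval : L ((1:ℝ),(0:ℝ)) + L ((0:ℝ),(1:ℝ)) = Ntil τ + K (G (τ, η)) :=
      hPq (τ, η) hpU
    have hQG : Q τ η = G (τ, η) := rfl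
    rw [hTH, hEH, hQG, hHval, hH1 τ hτ]
    linear_combination hsym + heq2 - deriv K (G (τ, η)) * hPval
  · intro τ hτ _
    rw [hH0 τ hτ, hH1 τ hτ]
  · intro η hη
    rw [hH, pdEta, derivWithin_congr (fun y hy => hsol.init y hy) (hsol.init η hη),
      hsol.init η hη]
end
end

section
/- Let (Q,Ñ) be a classical solution of the relaxed system on [0,∞), and suppose additionally that K'(φ) ≤ 0 for all φ ∈ ℝ. Then for all τ ≥ 0: min_{η∈[0,1]} H_init(η) ≤ Ñ(τ) ≤ max_{η∈[0,1]} H_init(η), where H_init(η) := Q_init'(η) − K(Q_init(η)). -/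
open Real Set MeasureTheory Filter Topology
open scoped ENNReal

noncomputable section

set_option maxHeartbeats 1000000

/-- The space-time domain. -/
def SD : Set (ℝ × ℝ) := Ici (0:ℝ) ×ˢ Icc (0:ℝ) 1

def Ldrv (Q : ℝ → ℝ → ℝ) : ℝ × ℝ → (ℝ × ℝ →L[ℝ] ℝ) :=
  fderivWithin ℝ (Function.uncurry Q) SD

lemma Ico0_top : Ico0 ⊤ = Ici (0:ℝ) := by
  ext x; simp [Ico0, Ici]

lemma uniqueDiffOn_SD : UniqueDiffOn ℝ SD := by
  apply uniqueDiffOn_convex ((convex_Ici 0).prod (convex_Icc 0 1))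
  unfold SD
  rw [interior_prod_eq, interior_Ici, interior_Icc]
  exact ⟨(1, 1/2), by norm_num, by norm_num⟩

section

variable {ΦF : ℝ} {K : ℝ → ℝ} {Qinit : ℝ → ℝ} {Q : ℝ → ℝ → ℝ} {Ntil : ℝ → ℝ}

lemma regS (hsol : IsRelaxedSol K ΦF ⊤ Qinit Q Ntil) :
    ContDiffOn ℝ 1 (Function.uncurry Q) SD := by
  have := hsol.reg; rwa [Ico0_top] at this

lemma hasF (hsol : IsRelaxedSol K ΦF ⊤ Qinit Q Ntil) {p : ℝ × ℝ} (hp : p ∈ SD) :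
    HasFDerivWithinAt (Function.uncurry Q) (Ldrv Q p) SD p :=
  (((regS hsol).differentiableOn one_ne_zero) p hp).hasFDerivWithinAt

lemma Lcont (hsol : IsRelaxedSol K ΦF ⊤ Qinit Q Ntil) :
    ContinuousOn (Ldrv Q) SD :=
  (regS hsol).continuousOn_fderivWithin uniqueDiffOn_SD le_rfl

lemma memSD {t x : ℝ} (ht : 0 ≤ t) (hx : x ∈ Icc (0:ℝ) 1) : ((t, x) : ℝ × ℝ) ∈ SD :=
  ⟨ht, hx⟩

lemma hasDeriv_eta (hsol : IsRelaxedSol K ΦF ⊤ Qinit Q Ntil) {t x : ℝ}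
    (ht : 0 ≤ t) (hx : x ∈ Icc (0:ℝ) 1) :
    HasDerivWithinAt (fun y => Q t y) (Ldrv Q (t, x) (0, 1)) (Icc 0 1) x := by
  have hj : HasDerivAt (fun y : ℝ => ((t, y) : ℝ × ℝ)) (0, 1) x :=
    HasDerivAt.prodMk (hasDerivAt_const x t) (hasDerivAt_id x)
  have := (hasF hsol (memSD ht hx)).comp_hasDerivWithinAt x
    (hj.hasDerivWithinAt (s := Icc 0 1)) (fun y hy => memSD ht hy)
  exact this

lemma pdEta_eq (hsol : IsRelaxedSol K ΦF ⊤ Qinit Q Ntil) {t x : ℝ}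
    (ht : 0 ≤ t) (hx : x ∈ Icc (0:ℝ) 1) :
    pdEta Q t x = Ldrv Q (t, x) (0, 1) :=
  (hasDeriv_eta hsol ht hx).derivWithin (uniqueDiffOn_Icc one_pos x hx)

lemma hasDeriv_tau (hsol : IsRelaxedSol K ΦF ⊤ Qinit Q Ntil) {t x : ℝ}
    (ht : 0 ≤ t) (hx : x ∈ Icc (0:ℝ) 1) :
    HasDerivWithinAt (fun s => Q s x) (Ldrv Q (t, x) (1, 0)) (Ici 0) t := by
  have hj : HasDerivAt (fun s : ℝ => ((s, x) : ℝ × ℝ)) (1, 0) t :=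
    HasDerivAt.prodMk (hasDerivAt_id t) (hasDerivAt_const t x)
  exact (hasF hsol (memSD ht hx)).comp_hasDerivWithinAt t
    (hj.hasDerivWithinAt (s := Ici 0)) (fun s hs => memSD hs hx)

lemma pdTau_eq (hsol : IsRelaxedSol K ΦF ⊤ Qinit Q Ntil) {t x : ℝ}
    (ht : 0 ≤ t) (hx : x ∈ Icc (0:ℝ) 1) :
    pdTau Q t x = Ldrv Q (t, x) (1, 0) :=
  (hasDeriv_tau hsol ht hx).derivWithin (uniqueDiffOn_Ici 0 t ht)

end
section
variable {ΦF : ℝ} {K : ℝ → ℝ} {Qinit : ℝ → ℝ} {Q : ℝ → ℝ → ℝ} {Ntil : ℝ → ℝ}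

lemma Ncont' (hsol : IsRelaxedSol K ΦF ⊤ Qinit Q Ntil) : ContinuousOn Ntil (Ici 0) := by
  have := hsol.Ncont; rwa [Ico0_top] at this

lemma pde' (hsol : IsRelaxedSol K ΦF ⊤ Qinit Q Ntil) (hKc : Continuous K) :
    ∀ t ∈ Ici (0:ℝ), ∀ x ∈ Icc (0:ℝ) 1,
      Ldrv Q (t, x) (1, 0) + Ldrv Q (t, x) (0, 1) = Ntil t + K (Q t x) := by
  set g : ℝ × ℝ → ℝ := fun p =>
    Ldrv Q p (1, 0) + Ldrv Q p (0, 1) - Ntil p.1 - K (Function.uncurry Q p) with hg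
  have hgc : ContinuousOn g SD := by
    apply ContinuousOn.sub
    · apply ContinuousOn.sub
      · exact ((Lcont hsol).clm_apply continuousOn_const).add
          ((Lcont hsol).clm_apply continuousOn_const)
      · exact (Ncont' hsol).comp continuousOn_fst (fun p hp => hp.1)
    · exact hKc.comp_continuousOn (regS hsol).continuousOn
  have hD0 : ∀ p ∈ (Ici (0:ℝ) ×ˢ Ioo (0:ℝ) 1), g p = 0 := by
    rintro ⟨t, x⟩ ⟨ht, hx⟩
    have hx' : x ∈ Icc (0:ℝ) 1 := Ioo_subset_Icc_self hx
    have := hsol.pde t (by rw [Ico0_top]; exact ht) x hx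
    rw [pdTau_eq hsol ht hx', pdEta_eq hsol ht hx'] at this
    simp only [hg, Function.uncurry]
    linarith
  intro t ht x hx
  have hp : ((t, x) : ℝ × ℝ) ∈ SD := ⟨ht, hx⟩
  have hsub : (Ici (0:ℝ) ×ˢ Ioo (0:ℝ) 1) ⊆ SD :=
    Set.prod_mono_right Ioo_subset_Icc_self
  have hcl : ((t, x) : ℝ × ℝ) ∈ closure (Ici (0:ℝ) ×ˢ Ioo (0:ℝ) 1) := by
    rw [closure_prod_eq, closure_Ici, closure_Ioo (by norm_num : (0:ℝ) ≠ 1)]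
    exact hp
  have hne : (𝓝[(Ici (0:ℝ) ×ˢ Ioo (0:ℝ) 1)] ((t, x) : ℝ × ℝ)).NeBot :=
    mem_closure_iff_nhdsWithin_neBot.mp hcl
  have h1 : Filter.Tendsto g (𝓝[(Ici (0:ℝ) ×ˢ Ioo (0:ℝ) 1)] ((t, x) : ℝ × ℝ)) (𝓝 (g (t, x))) :=
    (hgc (t, x) hp).mono hsub
  have h2 : Filter.Tendsto g (𝓝[(Ici (0:ℝ) ×ˢ Ioo (0:ℝ) 1)] ((t, x) : ℝ × ℝ)) (𝓝 0) := by
    apply Filter.Tendsto.congr' _ tendsto_const_nhds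
    filter_upwards [self_mem_nhdsWithin] with p hp'
    exact (hD0 p hp').symm
  have : g (t, x) = 0 := tendsto_nhds_unique h1 h2
  simp only [hg, Function.uncurry] at this
  linarith

lemma pdTau_zero (hsol : IsRelaxedSol K ΦF ⊤ Qinit Q Ntil) {t : ℝ} (ht : 0 ≤ t) :
    Ldrv Q (t, 0) (1, 0) = 0 := by
  have h0 : Set.EqOn (fun s => Q s 0) (fun _ => (0:ℝ)) (Ici 0) := by
    intro s hs; exact hsol.bc s (by rw [Ico0_top]; exact hs)
  have h1 : HasDerivWithinAt (fun s => Q s 0) (Ldrv Q (t, 0) (1, 0)) (Ici 0) t :=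
    hasDeriv_tau hsol ht ⟨le_refl 0, by norm_num⟩
  have h2 : HasDerivWithinAt (fun s => Q s 0) (Ldrv Q (t, 0) (1, 0)) (Ici 0) t →
      derivWithin (fun s => Q s 0) (Ici 0) t = Ldrv Q (t, 0) (1, 0) :=
    fun h => h.derivWithin (uniqueDiffOn_Ici 0 t ht)
  have h3 := h2 h1
  rw [derivWithin_congr h0 (h0 ht)] at h3
  rw [← h3]; simp

lemma Ndef' (hsol : IsRelaxedSol K ΦF ⊤ Qinit Q Ntil) {t : ℝ} (ht : 0 ≤ t) :
    Ntil t = Ldrv Q (t, 1) (0, 1) - K ΦF := by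
  have := hsol.Ndef t (by rw [Ico0_top]; exact ht)
  rwa [pdEta_eq hsol ht ⟨by norm_num, le_refl 1⟩] at this

lemma pdEta_zero (hsol : IsRelaxedSol K ΦF ⊤ Qinit Q Ntil) (hKc : Continuous K)
    {t : ℝ} (ht : 0 ≤ t) :
    Ldrv Q (t, 0) (0, 1) = Ntil t + K 0 := by
  have := pde' hsol hKc t ht 0 ⟨le_refl 0, by norm_num⟩
  rw [pdTau_zero hsol ht, hsol.bc t (by rw [Ico0_top]; exact ht)] at this
  linarith

end
section
variable {ΦF : ℝ} {K : ℝ → ℝ} {Qinit : ℝ → ℝ} {Q : ℝ → ℝ → ℝ} {Ntil : ℝ → ℝ}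

lemma K_lip (hK : KAssump K ΦF) : ∃ C : ℝ, 0 ≤ C ∧ ∀ a b : ℝ, |K b - K a| ≤ C * |b - a| := by
  obtain ⟨C, hC⟩ := hK.bdd1
  refine ⟨C, le_trans (abs_nonneg _) (hC 0), fun a b => ?_⟩
  exact Convex.norm_image_sub_le_of_norm_deriv_le
    (fun x _ => (hK.smooth.differentiable two_ne_zero).differentiableAt)
    (fun x _ => hC x) convex_univ (mem_univ a) (mem_univ b)

lemma K'_lip (hK : KAssump K ΦF) :
    ∃ C : ℝ, 0 ≤ C ∧ ∀ a b : ℝ, |deriv K b - deriv K a| ≤ C * |b - a| := by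
  obtain ⟨C, hC⟩ := hK.bdd2
  refine ⟨C, le_trans (abs_nonneg _) (hC 0), fun a b => ?_⟩
  have hd : Differentiable ℝ (deriv K) := by
    have h2 : ContDiff ℝ ((1:ℕ∞)+1) K := by
      convert hK.smooth using 2; norm_num
    rw [contDiff_succ_iff_deriv] at h2
    exact h2.2.2.differentiable (by simp)
  exact Convex.norm_image_sub_le_of_norm_deriv_le
    (fun x _ => hd.differentiableAt) (fun x _ => hC x) convex_univ (mem_univ a) (mem_univ b)

lemma K_taylor (hK : KAssump K ΦF) :
    ∃ C : ℝ, 0 ≤ C ∧ ∀ a b : ℝ, |K b - K a - deriv K a * (b - a)| ≤ C * |b - a| ^ 2 := by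
  obtain ⟨C, hC0, hC⟩ := K'_lip hK
  refine ⟨C, hC0, fun a b => ?_⟩
  set φ : ℝ → ℝ := fun x => K x - deriv K a * x with hφ
  have hmem : ∀ x ∈ uIcc a b, |x - a| ≤ |b - a| := fun x hx => abs_sub_left_of_mem_uIcc hx
  have hder : ∀ x ∈ uIcc a b, HasDerivWithinAt φ (deriv K x - deriv K a) (uIcc a b) x := by
    intro x _
    have h := (((hK.smooth.differentiable two_ne_zero).differentiableAt.hasDerivAt (x := x)).sub
      ((hasDerivAt_id x).const_mul (deriv K a))).hasDerivWithinAt (s := uIcc a b)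
    exact h.congr_deriv (by ring)
  have hb : ∀ x ∈ uIcc a b, ‖deriv K x - deriv K a‖ ≤ C * |b - a| := fun x hx =>
    le_trans (hC a x) (by
      have := hmem x hx
      nlinarith [abs_nonneg (x - a), abs_nonneg (b - a)])
  have := Convex.norm_image_sub_le_of_norm_hasDerivWithin_le hder hb (convex_uIcc a b)
    left_mem_uIcc right_mem_uIcc
  have heq : φ b - φ a = K b - K a - deriv K a * (b - a) := by ring
  rw [heq] at this
  calc |K b - K a - deriv K a * (b - a)| ≤ C * |b - a| * ‖b - a‖ := this
    _ = C * |b - a| ^ 2 := by rw [Real.norm_eq_abs]; ring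

lemma Qcont (hsol : IsRelaxedSol K ΦF ⊤ Qinit Q Ntil) :
    ContinuousOn (Function.uncurry Q) SD := (regS hsol).continuousOn

lemma Qtop (hsol : IsRelaxedSol K ΦF ⊤ Qinit Q Ntil) (hK : KAssump K ΦF)
    {t : ℝ} (ht : 0 ≤ t) : Q t 1 = ΦF := by
  obtain ⟨C, hC0, hC⟩ := K_lip hK
  set f : ℝ → ℝ := fun s => Q s 1 - ΦF with hf
  have h1 : (1:ℝ) ∈ Icc (0:ℝ) 1 := ⟨by norm_num, le_refl 1⟩
  have hfc : ContinuousOn f (Icc 0 t) := by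
    apply ContinuousOn.sub _ continuousOn_const
    exact (Qcont hsol).comp (continuousOn_id.prodMk continuousOn_const)
      (fun s hs => ⟨hs.1, h1⟩)
  have hf' : ∀ s ∈ Ico 0 t, HasDerivWithinAt f (K (Q s 1) - K ΦF) (Ici s) s := by
    intro s hs
    have hs0 : (0:ℝ) ≤ s := hs.1
    have hpde := pde' hsol (hK.smooth.continuous) s hs0 1 h1
    have hnd := Ndef' hsol hs0
    have hval : Ldrv Q (s, 1) (1, 0) = K (Q s 1) - K ΦF := by linarith
    have := (hasDeriv_tau hsol hs0 h1).mono (Ici_subset_Ici.mpr hs0)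
    rw [hval] at this
    exact this.sub_const ΦF
  have hinit : ‖f 0‖ ≤ 0 := by
    have := hsol.init 1 h1
    simp [hf, this, hsol.init1]
  have hbd : ∀ s ∈ Ico 0 t, ‖K (Q s 1) - K ΦF‖ ≤ C * ‖f s‖ + 0 := by
    intro s _
    simpa [Real.norm_eq_abs, hf] using hC ΦF (Q s 1)
  have := norm_le_gronwallBound_of_norm_deriv_right_le hfc hf' hinit hbd t ⟨ht, le_refl t⟩
  rw [gronwallBound_ε0] at this
  simp only [zero_mul] at this
  have : ‖f t‖ ≤ 0 := this
  have : f t = 0 := by simpa [norm_eq_zero] using le_antisymm this (norm_nonneg _)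
  simpa [hf, sub_eq_zero] using this

end
section
variable {ΦF : ℝ} {K : ℝ → ℝ} {Qinit : ℝ → ℝ} {Q : ℝ → ℝ → ℝ} {Ntil : ℝ → ℝ}

lemma char_ode (hsol : IsRelaxedSol K ΦF ⊤ Qinit Q Ntil) (hKc : Continuous K)
    {c t₁ t₂ : ℝ} (h1 : 0 ≤ t₁)
    (hc : ∀ t ∈ Icc t₁ t₂, c + t ∈ Icc (0:ℝ) 1) :
    ∀ t ∈ Icc t₁ t₂, HasDerivWithinAt (fun s => Q s (c + s))
      (Ntil t + K (Q t (c + t))) (Icc t₁ t₂) t := by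
  intro t ht
  have ht0 : 0 ≤ t := h1.trans ht.1
  have hmem : ((t, c + t) : ℝ × ℝ) ∈ SD := ⟨ht0, hc t ht⟩
  have hr : HasDerivWithinAt (fun s : ℝ => ((s, c + s) : ℝ × ℝ)) (1, 1) (Icc t₁ t₂) t :=
    (HasDerivAt.prodMk (hasDerivAt_id t) ((hasDerivAt_id t).const_add c)).hasDerivWithinAt
  have hmaps : Set.MapsTo (fun s : ℝ => ((s, c + s) : ℝ × ℝ)) (Icc t₁ t₂) SD :=
    fun s hs => ⟨h1.trans hs.1, hc s hs⟩
  have hcomp := (hasF hsol hmem).comp_hasDerivWithinAt t hr hmaps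
  have hval : Ldrv Q (t, c + t) (1, 1) = Ntil t + K (Q t (c + t)) := by
    have hadd : ((1:ℝ), (1:ℝ)) = ((1:ℝ), (0:ℝ)) + ((0:ℝ), (1:ℝ)) := by norm_num
    rw [hadd, (Ldrv Q (t, c + t)).map_add]
    exact pde' hsol hKc t ht0 (c + t) (hc t ht)
  rw [hval] at hcomp
  exact hcomp

lemma char_cont (hsol : IsRelaxedSol K ΦF ⊤ Qinit Q Ntil)
    {c t₁ t₂ : ℝ} (h1 : 0 ≤ t₁)
    (hc : ∀ t ∈ Icc t₁ t₂, c + t ∈ Icc (0:ℝ) 1) :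
    ContinuousOn (fun s => Q s (c + s)) (Icc t₁ t₂) :=
  (Qcont hsol).comp (continuousOn_id.prodMk (continuousOn_const.add continuousOn_id))
    (fun s hs => ⟨h1.trans hs.1, hc s hs⟩)

lemma char_int (hsol : IsRelaxedSol K ΦF ⊤ Qinit Q Ntil) (hKc : Continuous K)
    {c t₁ t₂ : ℝ} (h1 : 0 ≤ t₁) (hle : t₁ ≤ t₂)
    (hc : ∀ t ∈ Icc t₁ t₂, c + t ∈ Icc (0:ℝ) 1) :
    Q t₂ (c + t₂) - Q t₁ (c + t₁) = ∫ s in t₁..t₂, (Ntil s + K (Q s (c + s))) := by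
  have hint : ContinuousOn (fun s => Ntil s + K (Q s (c + s))) (Icc t₁ t₂) := by
    apply ContinuousOn.add
    · exact (Ncont' hsol).mono (fun s hs => h1.trans hs.1)
    · exact hKc.comp_continuousOn (char_cont hsol h1 hc)
  symm
  apply intervalIntegral.integral_eq_sub_of_hasDerivAt_of_le hle
  · exact char_cont hsol h1 hc
  · intro t ht
    exact (char_ode hsol hKc h1 hc t (Ioo_subset_Icc_self ht)).hasDerivAt
      (Icc_mem_nhds ht.1 ht.2)
  · exact hint.intervalIntegrable_of_Icc hle

end
section
variable {ΦF : ℝ} {K : ℝ → ℝ} {Qinit : ℝ → ℝ} {Q : ℝ → ℝ → ℝ} {Ntil : ℝ → ℝ}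

lemma v_int (hsol : IsRelaxedSol K ΦF ⊤ Qinit Q Ntil) (hK : KAssump K ΦF)
    {c t₁ t₂ : ℝ} (h1 : 0 < t₁) (hle : t₁ ≤ t₂)
    (hlow : 0 < c + t₁) (hhigh : c + t₂ < 1) :
    Ldrv Q (t₂, c + t₂) (0, 1) - Ldrv Q (t₁, c + t₁) (0, 1)
      = ∫ s in t₁..t₂, deriv K (Q s (c + s)) * Ldrv Q (s, c + s) (0, 1) := by
  have hKc : Continuous K := hK.smooth.continuous
  set ε : ℝ := 1 - (c + t₂) with hεdef
  have hε : 0 < ε := by simp only [hεdef]; linarith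
  set hn : ℕ → ℝ := fun n => ε / (n + 1) with hhn
  have hnpos : ∀ n : ℕ, 0 < hn n := fun n => div_pos hε (by positivity)
  have hnle : ∀ n : ℕ, hn n ≤ ε := fun n => by
    apply div_le_self hε.le
    exact le_add_of_nonneg_left (Nat.cast_nonneg n)
  have hnlim : Filter.Tendsto hn atTop (𝓝 0) := by
    simp only [hhn, div_eq_mul_inv]
    rw [show (0:ℝ) = ε * 0 by ring]
    exact tendsto_const_nhds.mul (by
      have := tendsto_one_div_add_atTop_nhds_zero_nat (𝕜 := ℝ)
      simpa [one_div] using this)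
  have hc : ∀ t ∈ Icc t₁ t₂, c + t ∈ Icc (0:ℝ) 1 := fun t ht =>
    ⟨by linarith [ht.1], by linarith [ht.2]⟩
  have hcn : ∀ n : ℕ, ∀ t ∈ Icc t₁ t₂, (c + hn n) + t ∈ Icc (0:ℝ) 1 := fun n t ht =>
    ⟨by have := hnpos n; linarith [ht.1], by have := hnle n; linarith [ht.2]⟩
  -- notation
  set vv : ℝ → ℝ := fun t => Ldrv Q (t, c + t) (0, 1) with hvv
  set aa : ℝ → ℝ := fun s => deriv K (Q s (c + s)) with haa
  set w : ℕ → ℝ → ℝ := fun n t => (Q t ((c + hn n) + t) - Q t (c + t)) / hn n with hw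
  set g : ℕ → ℝ → ℝ := fun n s => (K (Q s ((c + hn n) + s)) - K (Q s (c + s))) / hn n with hg
  -- the basic integral identity for each n
  have hint1 : ContinuousOn (fun s => Ntil s + K (Q s (c + s))) (Icc t₁ t₂) :=
    ((Ncont' hsol).mono (fun s hs => h1.le.trans hs.1)).add
      (hKc.comp_continuousOn (char_cont hsol h1.le hc))
  have hint2 : ∀ n : ℕ, ContinuousOn (fun s => Ntil s + K (Q s ((c + hn n) + s))) (Icc t₁ t₂) :=
    fun n => ((Ncont' hsol).mono (fun s hs => h1.le.trans hs.1)).add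
      (hKc.comp_continuousOn (char_cont hsol h1.le (hcn n)))
  have hiden : ∀ n : ℕ, w n t₂ - w n t₁ = ∫ s in t₁..t₂, g n s := by
    intro n
    have base := char_int hsol hKc h1.le hle hc
    have shift := char_int hsol hKc h1.le hle (hcn n)
    have hsub : (Q t₂ ((c + hn n) + t₂) - Q t₂ (c + t₂))
        - (Q t₁ ((c + hn n) + t₁) - Q t₁ (c + t₁))
        = ∫ s in t₁..t₂, (K (Q s ((c + hn n) + s)) - K (Q s (c + s))) := by
      calc (Q t₂ ((c + hn n) + t₂) - Q t₂ (c + t₂)) - (Q t₁ ((c + hn n) + t₁) - Q t₁ (c + t₁))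
          = (∫ s in t₁..t₂, (Ntil s + K (Q s ((c + hn n) + s))))
            - ∫ s in t₁..t₂, (Ntil s + K (Q s (c + s))) := by rw [← shift, ← base]; ring
        _ = ∫ s in t₁..t₂, ((Ntil s + K (Q s ((c + hn n) + s))) - (Ntil s + K (Q s (c + s)))) :=
            (intervalIntegral.integral_sub ((hint2 n).intervalIntegrable_of_Icc hle (μ := volume))
              (hint1.intervalIntegrable_of_Icc hle (μ := volume))).symm
        _ = ∫ s in t₁..t₂, (K (Q s ((c + hn n) + s)) - K (Q s (c + s))) := by
            apply intervalIntegral.integral_congr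
            intro s _
            ring
    have hdiv : (∫ s in t₁..t₂, (K (Q s ((c + hn n) + s)) - K (Q s (c + s)))) / hn n
        = ∫ s in t₁..t₂, g n s := by
      rw [← intervalIntegral.integral_div]
    rw [hw]
    simp only []
    rw [div_sub_div_same, hsub, hdiv]
  -- slope limits
  have hslope : ∀ t : ℝ, 0 < t → 0 < c + t → c + t < 1 →
      Filter.Tendsto (fun n => w n t) atTop (𝓝 (vv t)) := by
    intro t ht hct hct1
    have hmemint : ((t, c + t) : ℝ × ℝ) ∈ SD := ⟨ht.le, ⟨hct.le, hct1.le⟩⟩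
    have hnhds : SD ∈ 𝓝 ((t, c + t) : ℝ × ℝ) := by
      apply Filter.mem_of_superset (IsOpen.mem_nhds (isOpen_Ioi.prod isOpen_Ioo)
        (⟨ht, hct, hct1⟩ : ((t, c+t):ℝ×ℝ) ∈ Ioi (0:ℝ) ×ˢ Ioo (0:ℝ) 1))
      exact Set.prod_mono (Ioi_subset_Ici le_rfl) Ioo_subset_Icc_self
    have hF : HasFDerivAt (Function.uncurry Q) (Ldrv Q (t, c + t)) (t, c + t) :=
      (hasF hsol hmemint).hasFDerivAt hnhds
    have hj : HasDerivAt (fun y : ℝ => ((t, y) : ℝ × ℝ)) (0, 1) (c + t) :=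
      HasDerivAt.prodMk (hasDerivAt_const _ t) (hasDerivAt_id _)
    have hslice : HasDerivAt (fun y => Q t y) (vv t) (c + t) := hF.comp_hasDerivAt _ hj
    rw [hasDerivAt_iff_tendsto_slope] at hslice
    have hseq : Filter.Tendsto (fun n => (c + t) + hn n) atTop (𝓝[≠] (c + t)) := by
      apply tendsto_nhdsWithin_of_tendsto_nhds_of_eventually_within
      · rw [show 𝓝 (c + t) = 𝓝 ((c + t) + 0) by rw [add_zero]]
        exact tendsto_const_nhds.add hnlim
      · filter_upwards with n
        exact ne_of_gt (lt_add_of_pos_right _ (hnpos n))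
    have hcomp := hslice.comp hseq
    apply hcomp.congr
    intro n
    simp only [Function.comp]
    rw [slope_def_field, hw]
    simp only []
    rw [show c + t + hn n = c + hn n + t by ring, show c + hn n + t - (c + t) = hn n by ring]
  -- bounds
  have hcptsub : (Icc t₁ t₂ ×ˢ Icc (0:ℝ) 1) ⊆ SD := fun p hp => ⟨h1.le.trans hp.1.1, hp.2⟩
  obtain ⟨C₃, hC₃⟩ := (isCompact_Icc.prod isCompact_Icc).exists_bound_of_continuousOn
    ((Lcont hsol).mono hcptsub)
  have hC₃0 : 0 ≤ C₃ := le_trans (norm_nonneg _)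
    (hC₃ (t₁, 0) ⟨⟨le_rfl, hle⟩, ⟨le_rfl, by norm_num⟩⟩)
  have hnorm01 : ‖((0:ℝ), (1:ℝ))‖ = 1 := by
    simp [Prod.norm_def]
  have hQlip : ∀ s ∈ Icc t₁ t₂, ∀ b ∈ Icc (0:ℝ) 1, ∀ b' ∈ Icc (0:ℝ) 1,
      |Q s b - Q s b'| ≤ C₃ * |b - b'| := by
    intro s hs b hb b' hb'
    have hbound : ∀ x ∈ Icc (0:ℝ) 1, ‖Ldrv Q (s, x) (0, 1)‖ ≤ C₃ := by
      intro x hx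
      calc ‖Ldrv Q (s, x) (0, 1)‖ ≤ ‖Ldrv Q (s, x)‖ * ‖((0:ℝ),(1:ℝ))‖ :=
            (Ldrv Q (s, x)).le_opNorm _
        _ = ‖Ldrv Q (s, x)‖ := by rw [hnorm01, mul_one]
        _ ≤ C₃ := hC₃ (s, x) ⟨hs, hx⟩
    have := Convex.norm_image_sub_le_of_norm_hasDerivWithin_le
      (fun x hx => hasDeriv_eta hsol (h1.le.trans hs.1) hx) hbound (convex_Icc 0 1) hb' hb
    simpa [Real.norm_eq_abs] using this
  obtain ⟨C₁, hC₁0, hC₁⟩ := K_lip hK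
  obtain ⟨C₂, hC₂0, hC₂⟩ := K_taylor hK
  have hδ : ∀ n : ℕ, ∀ s ∈ Icc t₁ t₂, |Q s ((c + hn n) + s) - Q s (c + s)| ≤ C₃ * hn n := by
    intro n s hs
    have h := hQlip s hs ((c + hn n) + s) (hcn n s hs) (c + s) (hc s hs)
    rwa [show (c + hn n) + s - (c + s) = hn n by ring, abs_of_pos (hnpos n)] at h
  -- pointwise limit of g
  have hglim : ∀ s ∈ Set.Ioc t₁ t₂,
      Filter.Tendsto (fun n => g n s) atTop (𝓝 (aa s * vv s)) := by
    intro s hs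
    have hs' : s ∈ Icc t₁ t₂ := Ioc_subset_Icc_self hs
    have hws := hslope s (h1.trans hs.1) (by linarith [hs'.1]) (by linarith [hs'.2])
    have hdec : ∀ n : ℕ, g n s = (K (Q s ((c + hn n) + s)) - K (Q s (c + s))
        - deriv K (Q s (c + s)) * (Q s ((c + hn n) + s) - Q s (c + s))) / hn n
        + aa s * w n s := by
      intro n
      rw [hg, hw, haa]
      simp only []
      field_simp
      ring
    have hrem : Filter.Tendsto (fun n => (K (Q s ((c + hn n) + s)) - K (Q s (c + s))
        - deriv K (Q s (c + s)) * (Q s ((c + hn n) + s) - Q s (c + s))) / hn n) atTop (𝓝 0) := by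
      apply squeeze_zero_norm _ (show Filter.Tendsto (fun n : ℕ => C₂ * C₃ ^ 2 * hn n) atTop (𝓝 0) by
        rw [show (0:ℝ) = C₂ * C₃ ^ 2 * 0 by ring]
        exact tendsto_const_nhds.mul hnlim)
      intro n
      have htay := hC₂ (Q s (c + s)) (Q s ((c + hn n) + s))
      have hd := hδ n s hs'
      rw [Real.norm_eq_abs, abs_div, abs_of_pos (hnpos n), div_le_iff₀ (hnpos n)]
      calc |K (Q s ((c + hn n) + s)) - K (Q s (c + s))
            - deriv K (Q s (c + s)) * (Q s ((c + hn n) + s) - Q s (c + s))|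
          ≤ C₂ * |Q s ((c + hn n) + s) - Q s (c + s)| ^ 2 := htay
        _ ≤ C₂ * (C₃ * hn n) ^ 2 := by
            apply mul_le_mul_of_nonneg_left _ hC₂0
            exact pow_le_pow_left₀ (abs_nonneg _) hd 2
        _ = C₂ * C₃ ^ 2 * hn n * hn n := by ring
    have := hrem.add ((tendsto_const_nhds (x := aa s)).mul hws)
    rw [zero_add] at this
    apply this.congr
    intro n
    rw [hdec n]
  -- uniform bound for g
  have hgbd : ∀ n : ℕ, ∀ s ∈ Set.Ioc t₁ t₂, ‖g n s‖ ≤ C₁ * C₃ := by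
    intro n s hs
    have hs' : s ∈ Icc t₁ t₂ := Ioc_subset_Icc_self hs
    rw [hg]
    simp only []
    rw [Real.norm_eq_abs, abs_div, abs_of_pos (hnpos n), div_le_iff₀ (hnpos n)]
    calc |K (Q s ((c + hn n) + s)) - K (Q s (c + s))|
        ≤ C₁ * |Q s ((c + hn n) + s) - Q s (c + s)| := hC₁ _ _
      _ ≤ C₁ * (C₃ * hn n) := mul_le_mul_of_nonneg_left (hδ n s hs') hC₁0
      _ = C₁ * C₃ * hn n := by ring
  -- measurability
  have hgmeas : ∀ n : ℕ, ContinuousOn (g n) (Icc t₁ t₂) := by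
    intro n
    apply ContinuousOn.div_const
    exact (hKc.comp_continuousOn (char_cont hsol h1.le (hcn n))).sub
      (hKc.comp_continuousOn (char_cont hsol h1.le hc))
  -- DCT
  have hDCT : Filter.Tendsto (fun n => ∫ s in t₁..t₂, g n s) atTop
      (𝓝 (∫ s in t₁..t₂, aa s * vv s)) := by
    apply intervalIntegral.tendsto_integral_filter_of_dominated_convergence
      (fun _ => C₁ * C₃)
    · filter_upwards with n
      apply ContinuousOn.aestronglyMeasurable _ measurableSet_uIoc
      apply (hgmeas n).mono
      rw [uIoc_of_le hle]
      exact Ioc_subset_Icc_self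
    · filter_upwards with n
      filter_upwards with s
      intro hsmem
      rw [uIoc_of_le hle] at hsmem
      exact hgbd n s hsmem
    · exact intervalIntegrable_const
    · filter_upwards with s
      intro hsmem
      rw [uIoc_of_le hle] at hsmem
      exact hglim s hsmem
  -- conclude
  have hLHS : Filter.Tendsto (fun n => w n t₂ - w n t₁) atTop (𝓝 (vv t₂ - vv t₁)) := by
    apply Filter.Tendsto.sub
    · exact hslope t₂ (h1.trans_le hle) (by linarith) hhigh
    · exact hslope t₁ h1 hlow (by linarith)
  have hLHS' : Filter.Tendsto (fun n => w n t₂ - w n t₁) atTop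
      (𝓝 (∫ s in t₁..t₂, aa s * vv s)) := by
    apply hDCT.congr
    intro n
    exact (hiden n).symm
  exact tendsto_nhds_unique hLHS hLHS'

end
section
variable {ΦF : ℝ} {K : ℝ → ℝ} {Qinit : ℝ → ℝ} {Q : ℝ → ℝ → ℝ} {Ntil : ℝ → ℝ}

lemma Kderiv_cont (hK : KAssump K ΦF) : Continuous (deriv K) := by
  have h2 : ContDiff ℝ ((1:ℕ∞)+1) K := by convert hK.smooth using 2; norm_num
  rw [contDiff_succ_iff_deriv] at h2
  exact h2.2.2.continuous

lemma key_upper (hsol : IsRelaxedSol K ΦF ⊤ Qinit Q Ntil) (hK : KAssump K ΦF)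
    (hK' : ∀ φ : ℝ, deriv K φ ≤ 0) {τb B : ℝ} (hτb : 0 < τb)
    (hentry : Ldrv Q (max (τb-1) 0, (1 - τb) + max (τb-1) 0) (0,1)
       - K (Q (max (τb-1) 0) ((1 - τb) + max (τb-1) 0)) < B)
    (hN : ∀ s ∈ Icc (max (τb-1) 0) τb, Ntil s ≤ B) :
    Ntil τb < B := by
  have hKc : Continuous K := hK.smooth.continuous
  set t₀ : ℝ := max (τb - 1) 0 with ht₀def
  set c : ℝ := 1 - τb with hcdef
  have ht₀0 : 0 ≤ t₀ := le_max_right _ _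
  have ht₀1 : τb - 1 ≤ t₀ := le_max_left _ _
  have ht₀τ : t₀ < τb := max_lt (by linarith) hτb
  have hct₀ : 0 ≤ c + t₀ := by simp only [hcdef]; linarith
  have hc : ∀ t ∈ Icc t₀ τb, c + t ∈ Icc (0:ℝ) 1 := fun t ht =>
    ⟨by linarith [ht.1], by simp only [hcdef]; linarith [ht.2]⟩
  set I : Set ℝ := Icc t₀ τb with hIdef
  set u : ℝ → ℝ := fun t => Q t (c + t) with hu
  set vf : ℝ → ℝ := fun t => Ldrv Q (t, c + t) (0, 1) with hvf
  set aa : ℝ → ℝ := fun t => deriv K (u t) with haa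
  set A : ℝ → ℝ := fun t => ∫ s in t₀..t, aa s with hA
  set HH : ℝ → ℝ := fun t => vf t - K (u t) with hHH
  set g : ℝ → ℝ := fun t => (HH t - B) * Real.exp (-A t) with hgdef
  -- continuity
  have hrc : ContinuousOn (fun t : ℝ => ((t, c + t) : ℝ × ℝ)) I :=
    continuousOn_id.prodMk (continuousOn_const.add continuousOn_id)
  have hrmaps : Set.MapsTo (fun t : ℝ => ((t, c + t) : ℝ × ℝ)) I SD :=
    fun t ht => ⟨ht₀0.trans ht.1, hc t ht⟩
  have hu_c : ContinuousOn u I := char_cont hsol ht₀0 hc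
  have hv_c : ContinuousOn vf I :=
    (((Lcont hsol).comp hrc hrmaps).clm_apply continuousOn_const)
  have ha_c : ContinuousOn aa I := (Kderiv_cont hK).comp_continuousOn hu_c
  have hav_c : ContinuousOn (fun s => aa s * vf s) I := ha_c.mul hv_c
  have hA_c : ContinuousOn A I := by
    have hint : IntegrableOn aa (uIcc t₀ τb) volume := by
      rw [uIcc_of_le ht₀τ.le]
      exact ha_c.integrableOn_Icc
    have := intervalIntegral.continuousOn_primitive_interval hint
    rwa [uIcc_of_le ht₀τ.le] at this
  have hH_c : ContinuousOn HH I := hv_c.sub (hKc.comp_continuousOn hu_c)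
  have hg_c : ContinuousOn g I :=
    (hH_c.sub continuousOn_const).mul (Real.continuous_exp.comp_continuousOn hA_c.neg)
  -- derivatives in the interior
  have hIoo : ∀ t ∈ Ioo t₀ τb, (0 < t ∧ 0 < c + t ∧ c + t < 1) := by
    intro t ht
    refine ⟨lt_of_le_of_lt ht₀0 ht.1, by linarith [ht.1], ?_⟩
    simp only [hcdef]; linarith [ht.2]
  have hv' : ∀ t ∈ Ioo t₀ τb, HasDerivAt vf (aa t * vf t) t := by
    intro t ht
    obtain ⟨ht0, hct, hct1⟩ := hIoo t ht
    set t₁ : ℝ := (t₀ + t) / 2 with ht₁def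
    have ht₁l : t₀ < t₁ := by simp only [ht₁def]; linarith [ht.1]
    have ht₁r : t₁ < t := by simp only [ht₁def]; linarith [ht.1]
    have ht₁0 : 0 < t₁ := lt_of_le_of_lt ht₀0 ht₁l
    have hct₁ : 0 < c + t₁ := by linarith
    have hct₁1 : c + t₁ < 1 := by simp only [hcdef]; linarith [ht.2]
    set F : ℝ → ℝ := fun x => vf t₁ + ∫ s in t₁..x, aa s * vf s with hF
    have hEq : Set.EqOn vf F (Ioo t₀ τb) := by
      intro x hx
      obtain ⟨hx0, hcx, hcx1⟩ := hIoo x hx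
      rcases le_total t₁ x with hcase | hcase
      · have := v_int hsol hK ht₁0 hcase hct₁ hcx1
        simp only [hF, hvf]
        simp only [haa, hu]
        linarith
      · have := v_int hsol hK hx0 hcase hcx hct₁1
        simp only [hF, hvf]
        rw [intervalIntegral.integral_symm]
        simp only [haa, hu]
        linarith
    have hsubI : Icc t₁ t ⊆ I := Icc_subset_Icc ht₁l.le ht.2.le
    have hInt : IntervalIntegrable (fun s => aa s * vf s) volume t₁ t := by
      apply ContinuousOn.intervalIntegrable
      rw [uIcc_of_le ht₁r.le]
      exact hav_c.mono hsubI
    have hMeas : StronglyMeasurableAtFilter (fun s => aa s * vf s) (𝓝 t) volume :=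
      ContinuousOn.stronglyMeasurableAtFilter isOpen_Ioo
        (hav_c.mono Ioo_subset_Icc_self) t ht
    have hCont : ContinuousAt (fun s => aa s * vf s) t :=
      (hav_c.mono Ioo_subset_Icc_self).continuousAt (Ioo_mem_nhds ht.1 ht.2)
    have hFd : HasDerivAt F (aa t * vf t) t :=
      (intervalIntegral.integral_hasDerivAt_right hInt hMeas hCont).const_add _
    apply hFd.congr_of_eventuallyEq
    filter_upwards [IsOpen.mem_nhds isOpen_Ioo ht] with x hx
    exact hEq hx
  have hu' : ∀ t ∈ Ioo t₀ τb, HasDerivAt u (Ntil t + K (u t)) t := by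
    intro t ht
    exact (char_ode hsol hKc ht₀0 hc t (Ioo_subset_Icc_self ht)).hasDerivAt
      (Icc_mem_nhds ht.1 ht.2)
  have hA' : ∀ t ∈ Ioo t₀ τb, HasDerivAt A (aa t) t := by
    intro t ht
    have hInt : IntervalIntegrable aa volume t₀ t := by
      apply ContinuousOn.intervalIntegrable
      rw [uIcc_of_le ht.1.le]
      exact ha_c.mono (Icc_subset_Icc le_rfl ht.2.le)
    have hMeas : StronglyMeasurableAtFilter aa (𝓝 t) volume :=
      ContinuousOn.stronglyMeasurableAtFilter isOpen_Ioo
        (ha_c.mono Ioo_subset_Icc_self) t ht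
    have hCont : ContinuousAt aa t :=
      (ha_c.mono Ioo_subset_Icc_self).continuousAt (Ioo_mem_nhds ht.1 ht.2)
    exact intervalIntegral.integral_hasDerivAt_right hInt hMeas hCont
  have hg' : ∀ t ∈ Ioo t₀ τb,
      HasDerivAt g (Real.exp (-A t) * (aa t * (B - Ntil t))) t := by
    intro t ht
    have hKu : HasDerivAt (fun x => K (u x)) (deriv K (u t) * (Ntil t + K (u t))) t := by
      have hKd : HasDerivAt K (deriv K (u t)) (u t) :=
        ((hK.smooth.differentiable two_ne_zero) (u t)).hasDerivAt
      exact hKd.comp t (hu' t ht)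
    have hHd : HasDerivAt HH (aa t * vf t - deriv K (u t) * (Ntil t + K (u t))) t :=
      (hv' t ht).sub hKu
    have hexp : HasDerivAt (fun x => Real.exp (-A x)) (Real.exp (-A t) * (-aa t)) t :=
      ((hA' t ht).neg).exp
    have hmul := (hHd.sub_const B).mul hexp
    have heq : (aa t * vf t - deriv K (u t) * (Ntil t + K (u t))) * Real.exp (-A t)
        + (HH t - B) * (Real.exp (-A t) * (-aa t))
        = Real.exp (-A t) * (aa t * (B - Ntil t)) := by
      simp only [hHH, haa]
      ring
    rw [heq] at hmul
    exact hmul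
  -- antitone
  have hanti : AntitoneOn g I := by
    apply antitoneOn_of_deriv_nonpos (convex_Icc t₀ τb) hg_c
    · intro t ht
      rw [interior_Icc] at ht
      exact ((hg' t ht).differentiableAt).differentiableWithinAt
    · intro t ht
      rw [interior_Icc] at ht
      rw [(hg' t ht).deriv]
      have h1 : 0 < Real.exp (-A t) := Real.exp_pos _
      have h2 : aa t ≤ 0 := hK' (u t)
      have h3 : Ntil t ≤ B := hN t (Ioo_subset_Icc_self ht)
      have h4 : aa t * (B - Ntil t) ≤ 0 := mul_nonpos_iff.mpr (Or.inr ⟨h2, by linarith⟩)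
      exact mul_nonpos_iff.mpr (Or.inl ⟨h1.le, h4⟩)
  have hends := hanti (left_mem_Icc.mpr ht₀τ.le) (right_mem_Icc.mpr ht₀τ.le) ht₀τ.le
  -- evaluate at the ends
  have hAt₀ : A t₀ = 0 := intervalIntegral.integral_same
  have hgt₀ : g t₀ = HH t₀ - B := by
    simp [hgdef, hAt₀]
  have hHt₀ : HH t₀ - B < 0 := by
    simp only [hHH, hvf, hu]
    linarith [hentry]
  have hHτ : HH τb = Ntil τb := by
    have hcτ : c + τb = 1 := by simp only [hcdef]; ring
    have hQτ : Q τb 1 = ΦF := Qtop hsol hK hτb.le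
    have hNd := Ndef' hsol hτb.le
    simp only [hHH, hvf, hu, hcτ, hQτ]
    rw [hNd]
  have hexppos : 0 < Real.exp (-A τb) := Real.exp_pos _
  have hgτ : g τb = (Ntil τb - B) * Real.exp (-A τb) := by
    simp only [hgdef, hHτ]
  rw [hgτ, hgt₀] at hends
  nlinarith
lemma key_lower (hsol : IsRelaxedSol K ΦF ⊤ Qinit Q Ntil) (hK : KAssump K ΦF)
    (hK' : ∀ φ : ℝ, deriv K φ ≤ 0) {τb B : ℝ} (hτb : 0 < τb)
    (hentry : B < Ldrv Q (max (τb-1) 0, (1 - τb) + max (τb-1) 0) (0,1)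
       - K (Q (max (τb-1) 0) ((1 - τb) + max (τb-1) 0)))
    (hN : ∀ s ∈ Icc (max (τb-1) 0) τb, B ≤ Ntil s) :
    B < Ntil τb := by
  have hKc : Continuous K := hK.smooth.continuous
  set t₀ : ℝ := max (τb - 1) 0 with ht₀def
  set c : ℝ := 1 - τb with hcdef
  have ht₀0 : 0 ≤ t₀ := le_max_right _ _
  have ht₀1 : τb - 1 ≤ t₀ := le_max_left _ _
  have ht₀τ : t₀ < τb := max_lt (by linarith) hτb
  have hct₀ : 0 ≤ c + t₀ := by simp only [hcdef]; linarith
  have hc : ∀ t ∈ Icc t₀ τb, c + t ∈ Icc (0:ℝ) 1 := fun t ht =>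
    ⟨by linarith [ht.1], by simp only [hcdef]; linarith [ht.2]⟩
  set I : Set ℝ := Icc t₀ τb with hIdef
  set u : ℝ → ℝ := fun t => Q t (c + t) with hu
  set vf : ℝ → ℝ := fun t => Ldrv Q (t, c + t) (0, 1) with hvf
  set aa : ℝ → ℝ := fun t => deriv K (u t) with haa
  set A : ℝ → ℝ := fun t => ∫ s in t₀..t, aa s with hA
  set HH : ℝ → ℝ := fun t => vf t - K (u t) with hHH
  set g : ℝ → ℝ := fun t => (HH t - B) * Real.exp (-A t) with hgdef
  -- continuity
  have hrc : ContinuousOn (fun t : ℝ => ((t, c + t) : ℝ × ℝ)) I :=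
    continuousOn_id.prodMk (continuousOn_const.add continuousOn_id)
  have hrmaps : Set.MapsTo (fun t : ℝ => ((t, c + t) : ℝ × ℝ)) I SD :=
    fun t ht => ⟨ht₀0.trans ht.1, hc t ht⟩
  have hu_c : ContinuousOn u I := char_cont hsol ht₀0 hc
  have hv_c : ContinuousOn vf I :=
    (((Lcont hsol).comp hrc hrmaps).clm_apply continuousOn_const)
  have ha_c : ContinuousOn aa I := (Kderiv_cont hK).comp_continuousOn hu_c
  have hav_c : ContinuousOn (fun s => aa s * vf s) I := ha_c.mul hv_c
  have hA_c : ContinuousOn A I := by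
    have hint : IntegrableOn aa (uIcc t₀ τb) volume := by
      rw [uIcc_of_le ht₀τ.le]
      exact ha_c.integrableOn_Icc
    have := intervalIntegral.continuousOn_primitive_interval hint
    rwa [uIcc_of_le ht₀τ.le] at this
  have hH_c : ContinuousOn HH I := hv_c.sub (hKc.comp_continuousOn hu_c)
  have hg_c : ContinuousOn g I :=
    (hH_c.sub continuousOn_const).mul (Real.continuous_exp.comp_continuousOn hA_c.neg)
  -- derivatives in the interior
  have hIoo : ∀ t ∈ Ioo t₀ τb, (0 < t ∧ 0 < c + t ∧ c + t < 1) := by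
    intro t ht
    refine ⟨lt_of_le_of_lt ht₀0 ht.1, by linarith [ht.1], ?_⟩
    simp only [hcdef]; linarith [ht.2]
  have hv' : ∀ t ∈ Ioo t₀ τb, HasDerivAt vf (aa t * vf t) t := by
    intro t ht
    obtain ⟨ht0, hct, hct1⟩ := hIoo t ht
    set t₁ : ℝ := (t₀ + t) / 2 with ht₁def
    have ht₁l : t₀ < t₁ := by simp only [ht₁def]; linarith [ht.1]
    have ht₁r : t₁ < t := by simp only [ht₁def]; linarith [ht.1]
    have ht₁0 : 0 < t₁ := lt_of_le_of_lt ht₀0 ht₁l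
    have hct₁ : 0 < c + t₁ := by linarith
    have hct₁1 : c + t₁ < 1 := by simp only [hcdef]; linarith [ht.2]
    set F : ℝ → ℝ := fun x => vf t₁ + ∫ s in t₁..x, aa s * vf s with hF
    have hEq : Set.EqOn vf F (Ioo t₀ τb) := by
      intro x hx
      obtain ⟨hx0, hcx, hcx1⟩ := hIoo x hx
      rcases le_total t₁ x with hcase | hcase
      · have := v_int hsol hK ht₁0 hcase hct₁ hcx1
        simp only [hF, hvf]
        simp only [haa, hu]
        linarith
      · have := v_int hsol hK hx0 hcase hcx hct₁1
        simp only [hF, hvf]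
        rw [intervalIntegral.integral_symm]
        simp only [haa, hu]
        linarith
    have hsubI : Icc t₁ t ⊆ I := Icc_subset_Icc ht₁l.le ht.2.le
    have hInt : IntervalIntegrable (fun s => aa s * vf s) volume t₁ t := by
      apply ContinuousOn.intervalIntegrable
      rw [uIcc_of_le ht₁r.le]
      exact hav_c.mono hsubI
    have hMeas : StronglyMeasurableAtFilter (fun s => aa s * vf s) (𝓝 t) volume :=
      ContinuousOn.stronglyMeasurableAtFilter isOpen_Ioo
        (hav_c.mono Ioo_subset_Icc_self) t ht
    have hCont : ContinuousAt (fun s => aa s * vf s) t :=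
      (hav_c.mono Ioo_subset_Icc_self).continuousAt (Ioo_mem_nhds ht.1 ht.2)
    have hFd : HasDerivAt F (aa t * vf t) t :=
      (intervalIntegral.integral_hasDerivAt_right hInt hMeas hCont).const_add _
    apply hFd.congr_of_eventuallyEq
    filter_upwards [IsOpen.mem_nhds isOpen_Ioo ht] with x hx
    exact hEq hx
  have hu' : ∀ t ∈ Ioo t₀ τb, HasDerivAt u (Ntil t + K (u t)) t := by
    intro t ht
    exact (char_ode hsol hKc ht₀0 hc t (Ioo_subset_Icc_self ht)).hasDerivAt
      (Icc_mem_nhds ht.1 ht.2)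
  have hA' : ∀ t ∈ Ioo t₀ τb, HasDerivAt A (aa t) t := by
    intro t ht
    have hInt : IntervalIntegrable aa volume t₀ t := by
      apply ContinuousOn.intervalIntegrable
      rw [uIcc_of_le ht.1.le]
      exact ha_c.mono (Icc_subset_Icc le_rfl ht.2.le)
    have hMeas : StronglyMeasurableAtFilter aa (𝓝 t) volume :=
      ContinuousOn.stronglyMeasurableAtFilter isOpen_Ioo
        (ha_c.mono Ioo_subset_Icc_self) t ht
    have hCont : ContinuousAt aa t :=
      (ha_c.mono Ioo_subset_Icc_self).continuousAt (Ioo_mem_nhds ht.1 ht.2)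
    exact intervalIntegral.integral_hasDerivAt_right hInt hMeas hCont
  have hg' : ∀ t ∈ Ioo t₀ τb,
      HasDerivAt g (Real.exp (-A t) * (aa t * (B - Ntil t))) t := by
    intro t ht
    have hKu : HasDerivAt (fun x => K (u x)) (deriv K (u t) * (Ntil t + K (u t))) t := by
      have hKd : HasDerivAt K (deriv K (u t)) (u t) :=
        ((hK.smooth.differentiable two_ne_zero) (u t)).hasDerivAt
      exact hKd.comp t (hu' t ht)
    have hHd : HasDerivAt HH (aa t * vf t - deriv K (u t) * (Ntil t + K (u t))) t :=
      (hv' t ht).sub hKu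
    have hexp : HasDerivAt (fun x => Real.exp (-A x)) (Real.exp (-A t) * (-aa t)) t :=
      ((hA' t ht).neg).exp
    have hmul := (hHd.sub_const B).mul hexp
    have heq : (aa t * vf t - deriv K (u t) * (Ntil t + K (u t))) * Real.exp (-A t)
        + (HH t - B) * (Real.exp (-A t) * (-aa t))
        = Real.exp (-A t) * (aa t * (B - Ntil t)) := by
      simp only [hHH, haa]
      ring
    rw [heq] at hmul
    exact hmul
  -- monotone
  have hanti : MonotoneOn g I := by
    apply monotoneOn_of_deriv_nonneg (convex_Icc t₀ τb) hg_c
    · intro t ht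
      rw [interior_Icc] at ht
      exact ((hg' t ht).differentiableAt).differentiableWithinAt
    · intro t ht
      rw [interior_Icc] at ht
      rw [(hg' t ht).deriv]
      have h1 : 0 < Real.exp (-A t) := Real.exp_pos _
      have h2 : aa t ≤ 0 := hK' (u t)
      have h3 : B ≤ Ntil t := hN t (Ioo_subset_Icc_self ht)
      have h4 : 0 ≤ aa t * (B - Ntil t) := mul_nonneg_iff.mpr (Or.inr ⟨h2, by linarith⟩)
      exact mul_nonneg h1.le h4
  have hends := hanti (left_mem_Icc.mpr ht₀τ.le) (right_mem_Icc.mpr ht₀τ.le) ht₀τ.le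
  -- evaluate at the ends
  have hAt₀ : A t₀ = 0 := intervalIntegral.integral_same
  have hgt₀ : g t₀ = HH t₀ - B := by
    simp [hgdef, hAt₀]
  have hHt₀ : 0 < HH t₀ - B := by
    simp only [hHH, hvf, hu]
    linarith [hentry]
  have hHτ : HH τb = Ntil τb := by
    have hcτ : c + τb = 1 := by simp only [hcdef]; ring
    have hQτ : Q τb 1 = ΦF := Qtop hsol hK hτb.le
    have hNd := Ndef' hsol hτb.le
    simp only [hHH, hvf, hu, hcτ, hQτ]
    rw [hNd]
  have hexppos : 0 < Real.exp (-A τb) := Real.exp_pos _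
  have hgτ : g τb = (Ntil τb - B) * Real.exp (-A τb) := by
    simp only [hgdef, hHτ]
  rw [hgτ, hgt₀] at hends
  nlinarith
end
section
variable {ΦF : ℝ} {K : ℝ → ℝ} {Qinit : ℝ → ℝ} {Q : ℝ → ℝ → ℝ} {Ntil : ℝ → ℝ}

lemma hinit_eq (hsol : IsRelaxedSol K ΦF ⊤ Qinit Q Ntil) {x : ℝ} (hx : x ∈ Icc (0:ℝ) 1) :
    Ldrv Q (0, x) (0, 1) - K (Q 0 x) = Hinit K Qinit x := by
  have h1 : Ldrv Q (0, x) (0, 1) = pdEta Q 0 x := (pdEta_eq hsol le_rfl hx).symm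
  have h2 : pdEta Q 0 x = derivWithin Qinit (Icc 0 1) x := by
    unfold pdEta
    exact derivWithin_congr (fun y hy => hsol.init y hy) (hsol.init x hx)
  rw [h1, h2, hsol.init x hx, Hinit]

lemma Ntil_zero (hsol : IsRelaxedSol K ΦF ⊤ Qinit Q Ntil) :
    Ntil 0 = Hinit K Qinit 1 := by
  have h1 : (1:ℝ) ∈ Icc (0:ℝ) 1 := ⟨by norm_num, le_rfl⟩
  have := Ndef' hsol le_rfl
  rw [this, ← hinit_eq hsol h1, hsol.init 1 h1, hsol.init1]

lemma entry_init (hsol : IsRelaxedSol K ΦF ⊤ Qinit Q Ntil) {τb : ℝ} (h0 : 0 < τb)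
    (h1 : τb ≤ 1) :
    Ldrv Q (max (τb-1) 0, (1 - τb) + max (τb-1) 0) (0,1)
      - K (Q (max (τb-1) 0) ((1 - τb) + max (τb-1) 0)) = Hinit K Qinit (1 - τb) := by
  have hmax : max (τb-1) 0 = 0 := max_eq_right (by linarith)
  rw [hmax, add_zero]
  exact hinit_eq hsol ⟨by linarith, by linarith⟩

lemma entry_bc (hsol : IsRelaxedSol K ΦF ⊤ Qinit Q Ntil) (hK : KAssump K ΦF)
    {τb : ℝ} (h1 : 1 < τb) :
    Ldrv Q (max (τb-1) 0, (1 - τb) + max (τb-1) 0) (0,1)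
      - K (Q (max (τb-1) 0) ((1 - τb) + max (τb-1) 0)) = Ntil (τb - 1) := by
  have hmax : max (τb-1) 0 = τb - 1 := max_eq_left (by linarith)
  rw [hmax, show (1 - τb) + (τb - 1) = 0 by ring]
  rw [pdEta_zero hsol hK.smooth.continuous (by linarith : (0:ℝ) ≤ τb - 1)]
  rw [hsol.bc (τb - 1) (by rw [Ico0_top]; exact (by linarith : (0:ℝ) ≤ τb - 1))]
  ring
end
/-- Proposition 5.4: global bounds on `Ñ` for the relaxed problem when `K' ≤ 0`. -/
theorem stmt12 (ΦF : ℝ) (hΦF : 0 < ΦF) (K : ℝ → ℝ) (hK : KAssump K ΦF)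
    (hK' : ∀ φ : ℝ, deriv K φ ≤ 0)
    (Qinit : ℝ → ℝ) (Q : ℝ → ℝ → ℝ) (Ntil : ℝ → ℝ)
    (hsol : IsRelaxedSol K ΦF ⊤ Qinit Q Ntil) :
    ∀ τ : ℝ, 0 ≤ τ →
      sInf (Hinit K Qinit '' Icc (0 : ℝ) 1) ≤ Ntil τ ∧
      Ntil τ ≤ sSup (Hinit K Qinit '' Icc (0 : ℝ) 1) := by
  have hKc : Continuous K := hK.smooth.continuous
  set m : ℝ := sInf (Hinit K Qinit '' Icc (0 : ℝ) 1) with hm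
  set M : ℝ := sSup (Hinit K Qinit '' Icc (0 : ℝ) 1) with hM
  have hHc : ContinuousOn (Hinit K Qinit) (Icc 0 1) := by
    apply ContinuousOn.sub
    · exact hsol.initReg.continuousOn_derivWithin (uniqueDiffOn_Icc one_pos) le_rfl
    · exact hKc.comp_continuousOn hsol.initReg.continuousOn
  have himg : IsCompact (Hinit K Qinit '' Icc (0:ℝ) 1) :=
    isCompact_Icc.image_of_continuousOn hHc
  have hband : ∀ x ∈ Icc (0:ℝ) 1, m ≤ Hinit K Qinit x ∧ Hinit K Qinit x ≤ M := by
    intro x hx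
    constructor
    · exact csInf_le himg.bddBelow (mem_image_of_mem _ hx)
    · exact le_csSup himg.bddAbove (mem_image_of_mem _ hx)
  have h1mem : (1:ℝ) ∈ Icc (0:ℝ) 1 := ⟨by norm_num, le_rfl⟩
  have hbase := Ntil_zero hsol
  have hN0 : m ≤ Ntil 0 ∧ Ntil 0 ≤ M := by rw [hbase]; exact hband 1 h1mem
  -- main induction
  have main : ∀ n : ℕ, ∀ τ ∈ Icc (0:ℝ) (n:ℝ), m ≤ Ntil τ ∧ Ntil τ ≤ M := by
    intro n
    induction n with
    | zero =>
      intro τ hτ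
      simp only [Nat.cast_zero] at hτ
      have : τ = 0 := le_antisymm hτ.2 hτ.1
      rw [this]; exact hN0
    | succ n IH =>
      -- entry values are bounded, given IH
      have hentry_up : ∀ τb : ℝ, 0 < τb → τb ≤ (n:ℝ) + 1 →
          Ldrv Q (max (τb-1) 0, (1 - τb) + max (τb-1) 0) (0,1)
            - K (Q (max (τb-1) 0) ((1 - τb) + max (τb-1) 0)) ≤ M := by
        intro τb h0 hub
        rcases le_or_gt τb 1 with hcase | hcase
        · rw [entry_init hsol h0 hcase]
          exact (hband _ ⟨by linarith, by linarith⟩).2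
        · rw [entry_bc hsol hK hcase]
          exact (IH (τb - 1) ⟨by linarith, by linarith⟩).2
      have hentry_lo : ∀ τb : ℝ, 0 < τb → τb ≤ (n:ℝ) + 1 →
          m ≤ Ldrv Q (max (τb-1) 0, (1 - τb) + max (τb-1) 0) (0,1)
            - K (Q (max (τb-1) 0) ((1 - τb) + max (τb-1) 0)) := by
        intro τb h0 hub
        rcases le_or_gt τb 1 with hcase | hcase
        · rw [entry_init hsol h0 hcase]
          exact (hband _ ⟨by linarith, by linarith⟩).1
        · rw [entry_bc hsol hK hcase]
          exact (IH (τb - 1) ⟨by linarith, by linarith⟩).1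
      have hJne : Set.Nonempty (Icc (n:ℝ) ((n:ℝ)+1)) := ⟨(n:ℝ), ⟨le_rfl, by linarith⟩⟩
      have hNcJ : ContinuousOn Ntil (Icc (n:ℝ) ((n:ℝ)+1)) :=
        (Ncont' hsol).mono (fun s hs => le_trans (Nat.cast_nonneg n) hs.1)
      -- upper bound on [n, n+1]
      have hupJ : ∀ s ∈ Icc (n:ℝ) ((n:ℝ)+1), Ntil s ≤ M := by
        obtain ⟨τs, hτsmem, hτsmax'⟩ := isCompact_Icc.exists_isMaxOn hJne hNcJ
        have hτsmax : ∀ s ∈ Icc (n:ℝ) ((n:ℝ)+1), Ntil s ≤ Ntil τs := fun s hs => hτsmax' hs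
        intro s hs
        refine le_trans (hτsmax s hs) ?_
        by_contra hcon
        push_neg at hcon
        have hτspos : 0 < τs := by
          rcases lt_or_ge 0 τs with h | h
          · exact h
          · exfalso
            have : τs = 0 := le_antisymm h (le_trans (Nat.cast_nonneg n) hτsmem.1)
            rw [this] at hcon
            exact absurd hN0.2 (not_le.mpr hcon)
        have hkey := key_upper hsol hK hK' hτspos
          (B := Ntil τs)
          (lt_of_le_of_lt (hentry_up τs hτspos hτsmem.2) hcon)
          (by
            intro s' hs'
            rcases le_or_gt s' (n:ℝ) with hc2 | hc2
            · exact le_trans (IH s' ⟨le_trans (le_max_right _ _) hs'.1, hc2⟩).2 hcon.le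
            · exact hτsmax s' ⟨hc2.le, le_trans hs'.2 hτsmem.2⟩)
        exact absurd rfl (ne_of_lt hkey)
      have hloJ : ∀ s ∈ Icc (n:ℝ) ((n:ℝ)+1), m ≤ Ntil s := by
        obtain ⟨τs, hτsmem, hτsmin'⟩ := isCompact_Icc.exists_isMinOn hJne hNcJ
        have hτsmin : ∀ s ∈ Icc (n:ℝ) ((n:ℝ)+1), Ntil τs ≤ Ntil s := fun s hs => hτsmin' hs
        intro s hs
        refine le_trans ?_ (hτsmin s hs)
        by_contra hcon
        push_neg at hcon
        have hτspos : 0 < τs := by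
          rcases lt_or_ge 0 τs with h | h
          · exact h
          · exfalso
            have : τs = 0 := le_antisymm h (le_trans (Nat.cast_nonneg n) hτsmem.1)
            rw [this] at hcon
            exact absurd hN0.1 (not_le.mpr hcon)
        have hkey := key_lower hsol hK hK' hτspos
          (B := Ntil τs)
          (lt_of_lt_of_le hcon (hentry_lo τs hτspos hτsmem.2))
          (by
            intro s' hs'
            rcases le_or_gt s' (n:ℝ) with hc2 | hc2
            · exact le_trans hcon.le (IH s' ⟨le_trans (le_max_right _ _) hs'.1, hc2⟩).1
            · exact hτsmin s' ⟨hc2.le, le_trans hs'.2 hτsmem.2⟩)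
        exact absurd rfl (ne_of_lt hkey)
      intro τ hτ
      rcases le_or_gt τ (n:ℝ) with hc | hc
      · exact IH τ ⟨hτ.1, hc⟩
      · have hτJ : τ ∈ Icc (n:ℝ) ((n:ℝ)+1) := ⟨hc.le, by exact_mod_cast hτ.2⟩
        exact ⟨hloJ τ hτJ, hupJ τ hτJ⟩
  intro τ hτ
  exact main ⌈τ⌉₊ τ ⟨hτ, Nat.le_ceil τ⟩
end
end

section
/- If ∫₀^{Φ_F} 1/K(φ) dφ > 1, then there exists a steady state of the Q-system and it is unique (i.e., there is exactly one pair (Q*, N*) satisfying the steady-state conditions). If instead ∫₀^{Φ_F} 1/K(φ) dφ ≤ 1, then no steady state exists. -/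
open Real Set MeasureTheory Filter Topology
open scoped ENNReal

noncomputable section

namespace S14


def pr (ΦF x : ℝ) : ℝ := max 0 (min x ΦF)

lemma pr_mem (hΦF : 0 < ΦF) (x : ℝ) : pr ΦF x ∈ Icc (0:ℝ) ΦF :=
  ⟨le_max_left _ _, max_le hΦF.le (min_le_right _ _)⟩

lemma pr_eq {ΦF x : ℝ} (hx : x ∈ Icc (0:ℝ) ΦF) : pr ΦF x = x := by
  simp [pr, min_eq_left hx.2, max_eq_right hx.1]

lemma pr_cont (ΦF : ℝ) : Continuous (pr ΦF) :=
  continuous_const.max (continuous_id.min continuous_const)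

def Kt (K : ℝ → ℝ) (ΦF x : ℝ) : ℝ := K (pr ΦF x)

variable {K : ℝ → ℝ} {ΦF : ℝ}

lemma Kt_cont (hK : KAssump K ΦF) : Continuous (Kt K ΦF) :=
  hK.smooth.continuous.comp (pr_cont ΦF)

lemma Kt_pos (hΦF : 0 < ΦF) (hK : KAssump K ΦF) (x : ℝ) : 0 < Kt K ΦF x :=
  hK.pos _ (pr_mem hΦF x)

lemma Kt_eq {x : ℝ} (hx : x ∈ Icc (0:ℝ) ΦF) : Kt K ΦF x = K x := by
  rw [Kt, pr_eq hx]

def G (K : ℝ → ℝ) (ΦF c q : ℝ) : ℝ := ∫ x in (0:ℝ)..q, (Kt K ΦF x + c)⁻¹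

lemma g_cont (hΦF : 0 < ΦF) (hK : KAssump K ΦF) {c : ℝ} (hc : 0 ≤ c) :
    Continuous (fun x => (Kt K ΦF x + c)⁻¹) :=
  ((Kt_cont hK).add continuous_const).inv₀ fun x =>
    (add_pos_of_pos_of_nonneg (Kt_pos hΦF hK x) hc).ne'

lemma G_hasDeriv (hΦF : 0 < ΦF) (hK : KAssump K ΦF) {c : ℝ} (hc : 0 ≤ c) (q : ℝ) :
    HasDerivAt (G K ΦF c) ((Kt K ΦF q + c)⁻¹) q :=
  intervalIntegral.integral_hasDerivAt_right
    ((g_cont hΦF hK hc).intervalIntegrable _ _)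
    ((g_cont hΦF hK hc).stronglyMeasurableAtFilter _ _)
    (g_cont hΦF hK hc).continuousAt

lemma G_zero (c : ℝ) : G K ΦF c 0 = 0 := intervalIntegral.integral_same

lemma G_strictMono (hΦF : 0 < ΦF) (hK : KAssump K ΦF) {c : ℝ} (hc : 0 ≤ c) :
    StrictMono (G K ΦF c) := by
  apply strictMono_of_deriv_pos
  intro q
  rw [(G_hasDeriv hΦF hK hc q).deriv]
  exact inv_pos.2 (add_pos_of_pos_of_nonneg (Kt_pos hΦF hK q) hc)



lemma exists_ub (hΦF : 0 < ΦF) (hK : KAssump K ΦF) :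
    ∃ M : ℝ, 0 < M ∧ ∀ x, Kt K ΦF x ≤ M := by
  obtain ⟨z, hz, hmax⟩ := isCompact_Icc.exists_isMaxOn ⟨0, le_rfl, hΦF.le⟩
    (hK.smooth.continuous.continuousOn (s := Icc 0 ΦF))
  exact ⟨K z, hK.pos z hz, fun x => hmax (pr_mem hΦF x)⟩

lemma exists_lb (hΦF : 0 < ΦF) (hK : KAssump K ΦF) :
    ∃ m : ℝ, 0 < m ∧ ∀ x, m ≤ Kt K ΦF x := by
  obtain ⟨z, hz, hmin⟩ := isCompact_Icc.exists_isMinOn ⟨0, le_rfl, hΦF.le⟩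
    (hK.smooth.continuous.continuousOn (s := Icc 0 ΦF))
  exact ⟨K z, hK.pos z hz, fun x => hmin (pr_mem hΦF x)⟩

lemma I_anti (hΦF : 0 < ΦF) (hK : KAssump K ΦF) {c c' : ℝ} (hc : 0 ≤ c) (hcc : c < c') :
    G K ΦF c' ΦF < G K ΦF c ΦF := by
  have hc' : (0:ℝ) ≤ c' := hc.trans hcc.le
  obtain ⟨M, hM0, hM⟩ := exists_ub hΦF hK
  set δ : ℝ := (c' - c) / ((M + c) * (M + c')) with hδdef
  have hδ : 0 < δ := by
    apply div_pos (by linarith)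
    positivity
  have key : ∀ x ∈ Icc (0:ℝ) ΦF, (Kt K ΦF x + c')⁻¹ + δ ≤ (Kt K ΦF x + c)⁻¹ := by
    intro x _
    have h1 : 0 < Kt K ΦF x + c := add_pos_of_pos_of_nonneg (Kt_pos hΦF hK x) hc
    have h2 : 0 < Kt K ΦF x + c' := add_pos_of_pos_of_nonneg (Kt_pos hΦF hK x) hc'
    have h3 : (Kt K ΦF x + c)⁻¹ - (Kt K ΦF x + c')⁻¹
        = (c' - c) / ((Kt K ΦF x + c) * (Kt K ΦF x + c')) := by
      rw [inv_sub_inv h1.ne' h2.ne']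
      congr 1
      ring
    have h4 : δ ≤ (c' - c) / ((Kt K ΦF x + c) * (Kt K ΦF x + c')) := by
      rw [hδdef]
      apply div_le_div_of_nonneg_left (by linarith) (by positivity)
      have := hM x
      nlinarith [h1, h2, Kt_pos hΦF hK x]
    linarith
  have hint : ∀ c0 : ℝ, 0 ≤ c0 →
      IntervalIntegrable (fun x => (Kt K ΦF x + c0)⁻¹) volume 0 ΦF :=
    fun c0 h => (g_cont hΦF hK h).intervalIntegrable _ _
  have hmono := intervalIntegral.integral_mono_on hΦF.le
    ((hint c' hc').add intervalIntegrable_const) (hint c hc) key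
  rw [intervalIntegral.integral_add (hint c' hc') intervalIntegrable_const (μ := volume),
    intervalIntegral.integral_const] at hmono
  have : 0 < (ΦF - 0) • δ := by rw [smul_eq_mul, sub_zero]; exact mul_pos hΦF hδ
  have hGG : G K ΦF c' ΦF + (ΦF - 0) • δ ≤ G K ΦF c ΦF := hmono
  linarith

lemma I_contOn (hΦF : 0 < ΦF) (hK : KAssump K ΦF) :
    ContinuousOn (fun c => G K ΦF c ΦF) (Ici 0) := by
  obtain ⟨m, hm0, hm⟩ := exists_lb hΦF hK
  apply LipschitzOnWith.continuousOn (K := Real.toNNReal (ΦF / m^2))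
  apply LipschitzOnWith.of_dist_le_mul
  intro c hc c' hc'
  simp only [mem_Ici] at hc hc'
  rw [Real.coe_toNNReal _ (by positivity), Real.dist_eq, Real.dist_eq]
  have hint : ∀ c0 : ℝ, 0 ≤ c0 →
      IntervalIntegrable (fun x => (Kt K ΦF x + c0)⁻¹) volume 0 ΦF :=
    fun c0 h => (g_cont hΦF hK h).intervalIntegrable _ _
  have hsub : G K ΦF c ΦF - G K ΦF c' ΦF
      = ∫ x in (0:ℝ)..ΦF, ((Kt K ΦF x + c)⁻¹ - (Kt K ΦF x + c')⁻¹) :=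
    (intervalIntegral.integral_sub (hint c hc) (hint c' hc')).symm
  rw [hsub]
  have hbound : ∀ x ∈ uIoc (0:ℝ) ΦF,
      ‖(Kt K ΦF x + c)⁻¹ - (Kt K ΦF x + c')⁻¹‖ ≤ |c - c'| / m^2 := by
    intro x _
    have h1 : 0 < Kt K ΦF x + c := add_pos_of_pos_of_nonneg (Kt_pos hΦF hK x) hc
    have h2 : 0 < Kt K ΦF x + c' := add_pos_of_pos_of_nonneg (Kt_pos hΦF hK x) hc'
    rw [inv_sub_inv h1.ne' h2.ne', Real.norm_eq_abs, abs_div,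
      abs_of_pos (mul_pos h1 h2)]
    have hnum : |Kt K ΦF x + c' - (Kt K ΦF x + c)| = |c - c'| := by
      rw [show Kt K ΦF x + c' - (Kt K ΦF x + c) = -(c - c') by ring, abs_neg]
    rw [hnum]
    apply div_le_div_of_nonneg_left (abs_nonneg _) (by positivity)
    calc m^2 = m * m := sq m
      _ ≤ (Kt K ΦF x + c) * (Kt K ΦF x + c') := by
          apply mul_le_mul _ _ hm0.le (by linarith [hm x])
          · linarith [hm x]
          · linarith [hm x]
  calc ‖∫ x in (0:ℝ)..ΦF, ((Kt K ΦF x + c)⁻¹ - (Kt K ΦF x + c')⁻¹)‖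
      ≤ |c - c'| / m^2 * |ΦF - 0| :=
        intervalIntegral.norm_integral_le_of_norm_le_const hbound
    _ = ΦF / m^2 * |c - c'| := by
        rw [sub_zero, abs_of_pos hΦF]; ring

lemma I_le (hΦF : 0 < ΦF) (hK : KAssump K ΦF) {c : ℝ} (hc : 0 < c) :
    G K ΦF c ΦF ≤ ΦF / c := by
  have key : ∀ x ∈ Icc (0:ℝ) ΦF, (Kt K ΦF x + c)⁻¹ ≤ c⁻¹ := by
    intro x _
    exact inv_anti₀ hc (by linarith [Kt_pos hΦF hK x])
  have := intervalIntegral.integral_mono_on hΦF.le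
    ((g_cont hΦF hK hc.le).intervalIntegrable _ _) intervalIntegrable_const (μ := volume) key
  rw [intervalIntegral.integral_const] at this
  calc G K ΦF c ΦF ≤ (ΦF - 0) • c⁻¹ := this
    _ = ΦF / c := by rw [smul_eq_mul, sub_zero, div_eq_mul_inv]

lemma exists_cstar (hΦF : 0 < ΦF) (hK : KAssump K ΦF) (h1 : 1 < G K ΦF 0 ΦF) :
    ∃ c : ℝ, 0 < c ∧ G K ΦF c ΦF = 1 := by
  set c1 : ℝ := ΦF + 1 with hc1def
  have hc1 : (0:ℝ) < c1 := by positivity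
  have hI1 : G K ΦF c1 ΦF < 1 := by
    refine lt_of_le_of_lt (I_le hΦF hK hc1) ?_
    rw [div_lt_one hc1]
    linarith
  have hsub : Icc (0:ℝ) c1 ⊆ Ici 0 := Icc_subset_Ici_self
  have hIVT := intermediate_value_Icc' hc1.le ((I_contOn hΦF hK).mono hsub)
  obtain ⟨c, hcmem, hGc⟩ := hIVT ⟨hI1.le, h1.le⟩
  replace hGc : G K ΦF c ΦF = 1 := hGc
  refine ⟨c, ?_, hGc⟩
  rcases hcmem.1.lt_or_eq with h | h
  · exact h
  · exfalso; rw [← h] at hGc; rw [hGc] at h1; exact lt_irrefl 1 h1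

lemma G_surj (hΦF : 0 < ΦF) (hK : KAssump K ΦF) {c : ℝ} (hc : 0 ≤ c) :
    Function.Surjective (G K ΦF c) := by
  obtain ⟨M, hM0, hM⟩ := exists_ub hΦF hK
  set δ : ℝ := (M + c)⁻¹ with hδdef
  have hδ : 0 < δ := by positivity
  have hlow : ∀ x : ℝ, δ ≤ (Kt K ΦF x + c)⁻¹ := by
    intro x
    rw [hδdef]
    exact inv_anti₀ (add_pos_of_pos_of_nonneg (Kt_pos hΦF hK x) hc)
      (by linarith [hM x])
  have hub : ∀ q : ℝ, 0 ≤ q → δ * q ≤ G K ΦF c q := by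
    intro q hq
    have := intervalIntegral.integral_mono_on hq intervalIntegrable_const (μ := volume)
      ((g_cont hΦF hK hc).intervalIntegrable _ _) (fun x _ => hlow x)
    rw [intervalIntegral.integral_const] at this
    calc δ * q = (q - 0) • δ := by rw [smul_eq_mul, sub_zero, mul_comm]
      _ ≤ G K ΦF c q := this
  have hlb : ∀ q : ℝ, q ≤ 0 → G K ΦF c q ≤ δ * q := by
    intro q hq
    have := intervalIntegral.integral_mono_on hq intervalIntegrable_const (μ := volume)
      ((g_cont hΦF hK hc).intervalIntegrable _ _) (fun x _ => hlow x)
    rw [intervalIntegral.integral_const] at this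
    have hsymm : G K ΦF c q = -(∫ x in q..(0:ℝ), (Kt K ΦF x + c)⁻¹) := by
      rw [G, intervalIntegral.integral_symm]
    rw [hsymm]
    have : (0 - q) • δ ≤ ∫ x in q..(0:ℝ), (Kt K ΦF x + c)⁻¹ := this
    rw [smul_eq_mul] at this
    linarith
  have hcont : Continuous (G K ΦF c) :=
    (Differentiable.continuous (fun q => (G_hasDeriv hΦF hK hc q).differentiableAt))
  apply hcont.surjective
  · exact tendsto_atTop_mono' atTop ((eventually_ge_atTop 0).mono hub)
      (Tendsto.const_mul_atTop hδ tendsto_id)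
  · exact tendsto_atBot_mono' atBot ((eventually_le_atBot 0).mono hlb)
      (Tendsto.const_mul_atBot hδ tendsto_id)


lemma main_exist (hΦF : 0 < ΦF) (hK : KAssump K ΦF) {c : ℝ} (hc : 0 < c)
    (hIc : G K ΦF c ΦF = 1) :
    ∃ Qs : ℝ → ℝ, IsSteadyState K ΦF Qs (1/c) ∧
      ∀ η ∈ Icc (0:ℝ) 1, G K ΦF c (Qs η) = η := by
  have hsm := G_strictMono hΦF hK hc.le
  have hsurj := G_surj hΦF hK hc.le
  set e := StrictMono.orderIsoOfSurjective (G K ΦF c) hsm hsurj with hedef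
  set Qs : ℝ → ℝ := fun η => e.symm η with hQdef
  have hGQ : ∀ η : ℝ, G K ΦF c (Qs η) = η := by
    intro η
    have := e.apply_symm_apply η
    rwa [show ⇑e = G K ΦF c from rfl] at this
  have hQG : ∀ q : ℝ, Qs (G K ΦF c q) = q := fun q => hsm.injective (by rw [hGQ])
  have hQcont : Continuous Qs := e.symm.continuous
  have hpos : ∀ x : ℝ, 0 < Kt K ΦF x + c :=
    fun x => add_pos_of_pos_of_nonneg (Kt_pos hΦF hK x) hc.le
  have hd : ∀ η : ℝ, HasDerivAt Qs (Kt K ΦF (Qs η) + c) η := by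
    intro η
    have := HasDerivAt.of_local_left_inverse hQcont.continuousAt
      (G_hasDeriv hΦF hK hc.le (Qs η)) (inv_pos.2 (hpos (Qs η))).ne'
      (Filter.Eventually.of_forall hGQ)
    rwa [inv_inv] at this
  have hQ0 : Qs 0 = 0 := hsm.injective (by rw [hGQ, G_zero])
  have hQ1 : Qs 1 = ΦF := hsm.injective (by rw [hGQ, hIc])
  have hrange : ∀ η ∈ Icc (0:ℝ) 1, Qs η ∈ Icc 0 ΦF := by
    intro η hη
    constructor
    · rw [← hQ0]; exact e.symm.monotone hη.1
    · rw [← hQ1]; exact e.symm.monotone hη.2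
  have hsm1 : ContDiff ℝ 1 Qs := by
    rw [contDiff_one_iff_deriv]
    refine ⟨fun η => (hd η).differentiableAt, ?_⟩
    have : deriv Qs = fun η => Kt K ΦF (Qs η) + c := funext fun η => (hd η).deriv
    rw [this]
    exact ((Kt_cont hK).comp hQcont).add continuous_const
  refine ⟨Qs, ⟨hsm1.contDiffOn, one_div_pos.2 hc, ?_, hQ0, hQ1⟩, fun η _ => hGQ η⟩
  intro η hη
  rw [(hd η).hasDerivWithinAt.derivWithin ((uniqueDiffOn_Icc one_pos) η hη),
    Kt_eq (hrange η hη), one_div_one_div]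


lemma steady_mem (hΦF : 0 < ΦF) (hK : KAssump K ΦF) {Q : ℝ → ℝ} {N : ℝ}
    (hs : IsSteadyState K ΦF Q N) : ∀ η ∈ Icc (0:ℝ) 1, Q η ∈ Icc 0 ΦF := by
  obtain ⟨hreg, hN, hode, hQ0, hQ1⟩ := hs
  have hQc : ContinuousOn Q (Icc 0 1) := hreg.continuousOn
  have hcpos : 0 < 1/N := one_div_pos.2 hN
  intro η₀ hη₀
  by_contra hcon
  rw [mem_Icc, not_and_or, not_le, not_le] at hcon
  rcases hcon with h | h
  · -- Q η₀ < 0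
    have hη₀pos : 0 < η₀ := by
      rcases hη₀.1.lt_or_eq with h' | h'
      · exact h'
      · exfalso; rw [← h', hQ0] at h; exact lt_irrefl 0 h
    set S : Set ℝ := Icc 0 η₀ ∩ Q ⁻¹' (Ici 0) with hSdef
    have hScl : IsClosed S :=
      (hQc.mono (Icc_subset_Icc le_rfl hη₀.2)).preimage_isClosed_of_isClosed
        isClosed_Icc isClosed_Ici
    have hSne : S.Nonempty := ⟨0, ⟨le_rfl, hη₀pos.le⟩, by simp [hQ0]⟩
    have hSbdd : BddAbove S := ⟨η₀, fun y hy => hy.1.2⟩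
    set s := sSup S with hsdef
    have hsS : s ∈ S := hScl.csSup_mem hSne hSbdd
    have hsIcc : s ∈ Icc (0:ℝ) 1 := ⟨hsS.1.1, hsS.1.2.trans hη₀.2⟩
    have hsη₀ : s < η₀ := by
      rcases hsS.1.2.lt_or_eq with h' | h'
      · exact h'
      · exfalso; have := hsS.2; rw [h'] at this; exact absurd h (not_lt.2 this)
    have hlt : ∀ η ∈ Ioc s η₀, Q η < 0 := by
      intro η hη
      by_contra hge
      push_neg at hge
      have : η ∈ S := ⟨⟨hsS.1.1.trans hη.1.le, hη.2⟩, hge⟩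
      exact absurd (le_csSup hSbdd this) (not_le.2 hη.1)
    have hne : (𝓝[Ioc s η₀] s).NeBot := by
      apply mem_closure_iff_nhdsWithin_neBot.1
      rw [closure_Ioc hsη₀.ne]
      exact ⟨le_rfl, hsη₀.le⟩
    have hQs_le : Q s ≤ 0 := by
      haveI := hne
      have hcw : ContinuousWithinAt Q (Ioc s η₀) s :=
        (hQc s hsIcc).mono (fun y hy => ⟨hsS.1.1.trans hy.1.le, hy.2.trans hη₀.2⟩)
      exact le_of_tendsto hcw
        (eventually_mem_nhdsWithin.mono (fun y hy => (hlt y hy).le))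
    have hQs : Q s = 0 := le_antisymm hQs_le hsS.2
    have hdW : HasDerivWithinAt Q (K 0 + 1/N) (Icc 0 1) s := by
      have := (hreg.differentiableOn one_ne_zero s hsIcc).hasDerivWithinAt
      rwa [hode s hsIcc, hQs] at this
    have hdW2 : HasDerivWithinAt Q (K 0 + 1/N) (Icc s η₀) s :=
      hdW.mono (Icc_subset_Icc hsS.1.1 hη₀.2)
    rw [hasDerivWithinAt_iff_tendsto_slope, Icc_diff_left] at hdW2
    have hle : K 0 + 1/N ≤ 0 := by
      haveI := hne
      apply le_of_tendsto hdW2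
      apply eventually_mem_nhdsWithin.mono
      intro y hy
      rw [slope_def_field]
      apply div_nonpos_of_nonpos_of_nonneg
      · rw [hQs]; linarith [hlt y hy]
      · linarith [hy.1]
    have : 0 < K 0 + 1/N := add_pos (hK.pos 0 ⟨le_rfl, hΦF.le⟩) hcpos
    linarith
  · -- ΦF < Q η₀
    have hη₀lt : η₀ < 1 := by
      rcases hη₀.2.lt_or_eq with h' | h'
      · exact h'
      · exfalso; rw [h', hQ1] at h; exact lt_irrefl ΦF h
    set S : Set ℝ := Icc η₀ 1 ∩ Q ⁻¹' (Iic ΦF) with hSdef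
    have hScl : IsClosed S :=
      (hQc.mono (Icc_subset_Icc hη₀.1 le_rfl)).preimage_isClosed_of_isClosed
        isClosed_Icc isClosed_Iic
    have hSne : S.Nonempty := ⟨1, ⟨hη₀lt.le, le_rfl⟩, by simp [hQ1]⟩
    have hSbdd : BddBelow S := ⟨η₀, fun y hy => hy.1.1⟩
    set t := sInf S with htdef
    have htS : t ∈ S := hScl.csInf_mem hSne hSbdd
    have htIcc : t ∈ Icc (0:ℝ) 1 := ⟨hη₀.1.trans htS.1.1, htS.1.2⟩
    have hη₀t : η₀ < t := by
      rcases htS.1.1.lt_or_eq with h' | h'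
      · exact h'
      · exfalso; have := htS.2; rw [← h'] at this; exact absurd h (not_lt.2 this)
    have hgt : ∀ η ∈ Ico η₀ t, ΦF < Q η := by
      intro η hη
      by_contra hge
      push_neg at hge
      have : η ∈ S := ⟨⟨hη.1, hη.2.le.trans htS.1.2⟩, hge⟩
      exact absurd (csInf_le hSbdd this) (not_le.2 hη.2)
    have hne : (𝓝[Ico η₀ t] t).NeBot := by
      apply mem_closure_iff_nhdsWithin_neBot.1
      rw [closure_Ico hη₀t.ne]
      exact ⟨hη₀t.le, le_rfl⟩
    have hQt_ge : ΦF ≤ Q t := by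
      haveI := hne
      have hcw : ContinuousWithinAt Q (Ico η₀ t) t :=
        (hQc t htIcc).mono (fun y hy => ⟨hη₀.1.trans hy.1, hy.2.le.trans htS.1.2⟩)
      exact ge_of_tendsto hcw
        (eventually_mem_nhdsWithin.mono (fun y hy => (hgt y hy).le))
    have hQt : Q t = ΦF := le_antisymm htS.2 hQt_ge
    have hdW : HasDerivWithinAt Q (K ΦF + 1/N) (Icc 0 1) t := by
      have := (hreg.differentiableOn one_ne_zero t htIcc).hasDerivWithinAt
      rwa [hode t htIcc, hQt] at this
    have hdW2 : HasDerivWithinAt Q (K ΦF + 1/N) (Icc η₀ t) t :=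
      hdW.mono (Icc_subset_Icc hη₀.1 htS.1.2)
    rw [hasDerivWithinAt_iff_tendsto_slope, Icc_sdiff_right] at hdW2
    have hle : K ΦF + 1/N ≤ 0 := by
      haveI := hne
      apply le_of_tendsto hdW2
      apply eventually_mem_nhdsWithin.mono
      intro y hy
      rw [slope_def_field]
      apply div_nonpos_of_nonneg_of_nonpos
      · rw [hQt]; linarith [hgt y hy]
      · linarith [hy.2]
    have : 0 < K ΦF + 1/N := add_pos (hK.pos ΦF ⟨hΦF.le, le_rfl⟩) hcpos
    linarith

lemma steady_G (hΦF : 0 < ΦF) (hK : KAssump K ΦF) {Q : ℝ → ℝ} {N : ℝ}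
    (hs : IsSteadyState K ΦF Q N) : ∀ η ∈ Icc (0:ℝ) 1, G K ΦF (1/N) (Q η) = η := by
  have hmem := steady_mem hΦF hK hs
  obtain ⟨hreg, hN, hode, hQ0, hQ1⟩ := hs
  have hc : 0 < 1/N := one_div_pos.2 hN
  have hder : ∀ η ∈ Icc (0:ℝ) 1,
      HasDerivWithinAt (fun x => G K ΦF (1/N) (Q x) - x) 0 (Icc 0 1) η := by
    intro η hη
    have hQd : HasDerivWithinAt Q (K (Q η) + 1/N) (Icc 0 1) η := by
      have := (hreg.differentiableOn one_ne_zero η hη).hasDerivWithinAt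
      rwa [hode η hη] at this
    have hGd := (G_hasDeriv hΦF hK hc.le (Q η)).comp_hasDerivWithinAt η hQd
    have hKQ : 0 < K (Q η) + 1/N := add_pos (hK.pos _ (hmem η hη)) hc
    have heq : (Kt K ΦF (Q η) + 1/N)⁻¹ * (K (Q η) + 1/N) = 1 := by
      rw [Kt_eq (hmem η hη)]
      exact inv_mul_cancel₀ hKQ.ne'
    have hsub := hGd.sub (hasDerivWithinAt_id η (Icc 0 1))
    rw [heq, sub_self] at hsub
    exact hsub
  have hdiff : DifferentiableOn ℝ (fun x => G K ΦF (1/N) (Q x) - x) (Icc 0 1) :=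
    fun η hη => (hder η hη).differentiableWithinAt
  have hzero : ∀ η ∈ Ico (0:ℝ) 1,
      derivWithin (fun x => G K ΦF (1/N) (Q x) - x) (Icc 0 1) η = 0 := fun η hη =>
    (hder η (Ico_subset_Icc_self hη)).derivWithin
      ((uniqueDiffOn_Icc one_pos) η (Ico_subset_Icc_self hη))
  have hconst := constant_of_derivWithin_zero hdiff hzero
  intro η hη
  have h2 := hconst η hη
  simp only [hQ0, G_zero, sub_zero] at h2
  linarith [h2]

end S14

/-- Proposition 5.8: sharp dichotomy for existence/uniqueness of the steady state. -/
theorem stmt14 (ΦF : ℝ) (hΦF : 0 < ΦF) (K : ℝ → ℝ) (hK : KAssump K ΦF) :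
    ((1 < ∫ φ in (0 : ℝ)..ΦF, 1 / K φ) →
      ∃ (Qs : ℝ → ℝ) (Ns : ℝ), IsSteadyState K ΦF Qs Ns ∧
        ∀ (Qs' : ℝ → ℝ) (Ns' : ℝ), IsSteadyState K ΦF Qs' Ns' →
          (∀ η ∈ Icc (0 : ℝ) 1, Qs' η = Qs η) ∧ Ns' = Ns) ∧
    ((∫ φ in (0 : ℝ)..ΦF, 1 / K φ) ≤ 1 →
      ¬ ∃ (Qs : ℝ → ℝ) (Ns : ℝ), IsSteadyState K ΦF Qs Ns) := by
  have hIeq : S14.G K ΦF 0 ΦF = ∫ φ in (0:ℝ)..ΦF, 1 / K φ := by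
    apply intervalIntegral.integral_congr
    intro x hx
    rw [uIcc_of_le hΦF.le] at hx
    simp [S14.Kt_eq hx, one_div]
  constructor
  · intro h1
    obtain ⟨c, hc, hIc⟩ := S14.exists_cstar hΦF hK (by rw [hIeq]; exact h1)
    obtain ⟨Qs, hQs, hGQ⟩ := S14.main_exist hΦF hK hc hIc
    refine ⟨Qs, 1/c, hQs, ?_⟩
    intro Q' N' hs'
    have hN' : 0 < N' := hs'.2.1
    have hc' : 0 < 1/N' := one_div_pos.2 hN'
    have hGQ' := S14.steady_G hΦF hK hs'
    have hI' : S14.G K ΦF (1/N') ΦF = 1 := by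
      have h := hGQ' 1 ⟨zero_le_one, le_rfl⟩
      rwa [hs'.2.2.2.2] at h
    have hceq : 1/N' = c := by
      rcases lt_trichotomy (1/N') c with h | h | h
      · exfalso
        have := S14.I_anti hΦF hK hc'.le h
        rw [hI', hIc] at this
        exact lt_irrefl 1 this
      · exact h
      · exfalso
        have := S14.I_anti hΦF hK hc.le h
        rw [hI', hIc] at this
        exact lt_irrefl 1 this
    constructor
    · intro η hη
      have h1' := hGQ' η hη
      rw [hceq] at h1'
      exact (S14.G_strictMono hΦF hK hc.le).injective (h1'.trans (hGQ η hη).symm)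
    · rw [← one_div_one_div N', hceq]
  · rintro h2 ⟨Q, N, hs⟩
    have hc : 0 < 1/N := one_div_pos.2 hs.2.1
    have hI' : S14.G K ΦF (1/N) ΦF = 1 := by
      have h := S14.steady_G hΦF hK hs 1 ⟨zero_le_one, le_rfl⟩
      rwa [hs.2.2.2.2] at h
    have hanti := S14.I_anti hΦF hK le_rfl hc
    rw [hI', hIeq] at hanti
    linarith
end
end

section
/- Suppose ∫₀^{Φ_F} 1/K(φ) dφ ≤ 1. Then every classical solution of the Q-system blows up in finite time; more precisely, its maximal existence time τ* satisfies τ* ≤ ∫₀^{Φ_F} 1/K(φ) dφ ≤ 1 < ∞. -/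
open Real Set MeasureTheory Filter Topology
open scoped ENNReal

noncomputable section

/-- helper: equality on `Icc` from equality on `Ioo` plus continuity. -/
lemma eqOn_Icc_of_eqOn_Ioo' {f g : ℝ → ℝ} {a b : ℝ} (hab : a < b)
    (hf : ContinuousOn f (Icc a b)) (hg : ContinuousOn g (Icc a b))
    (h : EqOn f g (Ioo a b)) : EqOn f g (Icc a b) := by
  intro x hx
  have hcl : x ∈ closure (Ioo a b) := by rw [closure_Ioo hab.ne]; exact hx
  have hne : (𝓝[Ioo a b] x).NeBot := mem_closure_iff_nhdsWithin_neBot.mp hcl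
  have hf' : Tendsto f (𝓝[Ioo a b] x) (𝓝 (f x)) :=
    (hf x hx).mono_left (nhdsWithin_mono _ Ioo_subset_Icc_self)
  have hg' : Tendsto g (𝓝[Ioo a b] x) (𝓝 (g x)) :=
    (hg x hx).mono_left (nhdsWithin_mono _ Ioo_subset_Icc_self)
  have hg'' : Tendsto f (𝓝[Ioo a b] x) (𝓝 (g x)) :=
    hg'.congr' (eventually_nhdsWithin_of_forall fun y hy => (h hy).symm)
  exact tendsto_nhds_unique hf' hg''

/-- Theorem 6.5: blow-up of every classical solution under strong interaction
(`∫₀^{Φ_F} 1/K ≤ 1`), with the explicit bound `τ* ≤ ∫₀^{Φ_F} 1/K ≤ 1`. -/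
theorem stmt18 (ΦF : ℝ) (hΦF : 0 < ΦF) (K : ℝ → ℝ) (hK : KAssump K ΦF)
    (hint : (∫ φ in (0 : ℝ)..ΦF, 1 / K φ) ≤ 1) :
    ∀ (T : ℝ≥0∞) (Qinit : ℝ → ℝ) (Q : ℝ → ℝ → ℝ) (N : ℝ → ℝ),
      IsQSol K ΦF T Qinit Q N →
      T ≤ ENNReal.ofReal (∫ φ in (0 : ℝ)..ΦF, 1 / K φ) ∧
      ENNReal.ofReal (∫ φ in (0 : ℝ)..ΦF, 1 / K φ) ≤ 1 := by
  intro T Qinit Q N hsol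
  set I := ∫ φ in (0 : ℝ)..ΦF, 1 / K φ with hIdef
  have hKc : Continuous K := hK.smooth.continuous
  -- positivity of K on an open neighborhood of [0, ΦF]
  obtain ⟨δ, hδpos, hthick⟩ :=
    (isCompact_Icc : IsCompact (Icc (0:ℝ) ΦF)).exists_thickening_subset_open
      (isOpen_lt continuous_const hKc) (fun x hx => hK.pos x hx)
  have hKpos' : ∀ x ∈ Ioo (-δ) (ΦF + δ), 0 < K x := by
    intro x hx
    apply hthick
    rw [Metric.mem_thickening_iff]
    rcases le_or_gt x 0 with h0 | h0
    · exact ⟨0, ⟨le_rfl, hΦF.le⟩, by rw [Real.dist_eq]; rw [abs_of_nonpos (by linarith)]; linarith [hx.1]⟩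
    rcases le_or_gt x ΦF with h1 | h1
    · exact ⟨x, ⟨h0.le, h1⟩, by simpa using hδpos⟩
    · exact ⟨ΦF, ⟨hΦF.le, le_rfl⟩, by rw [Real.dist_eq]; rw [abs_of_pos (by linarith)]; linarith [hx.2]⟩
  have hsubU : Icc (0:ℝ) ΦF ⊆ Ioo (-δ) (ΦF + δ) := fun x hx =>
    ⟨by linarith [hx.1], by linarith [hx.2]⟩
  have hcont1K : ContinuousOn (fun φ => 1 / K φ) (Ioo (-δ) (ΦF + δ)) :=
    continuousOn_const.div hKc.continuousOn (fun x hx => (hKpos' x hx).ne')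
  -- F and its derivative
  set F : ℝ → ℝ := fun y => ∫ φ in (0:ℝ)..y, 1 / K φ with hFdef
  have h0U : (0:ℝ) ∈ Ioo (-δ) (ΦF + δ) := ⟨by linarith, by linarith⟩
  have hF' : ∀ y ∈ Ioo (-δ) (ΦF + δ), HasDerivAt F (1 / K y) y := by
    intro y hy
    apply intervalIntegral.integral_hasDerivAt_right
    · apply ContinuousOn.intervalIntegrable
      apply hcont1K.mono
      rw [Set.uIcc_eq_union]
      exact union_subset (Icc_subset_Ioo h0U.1 hy.2) (Icc_subset_Ioo hy.1 h0U.2)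
    · exact ContinuousOn.stronglyMeasurableAtFilter isOpen_Ioo hcont1K y hy
    · exact hcont1K.continuousAt (isOpen_Ioo.mem_nhds hy)
  have hint1K : IntervalIntegrable (fun φ => 1 / K φ) volume 0 ΦF := by
    apply ContinuousOn.intervalIntegrable
    apply hcont1K.mono
    rw [Set.uIcc_of_le hΦF.le]
    exact hsubU
  have hIpos : 0 < I :=
    intervalIntegral.intervalIntegral_pos_of_pos_on hint1K
      (fun x hx => by
        have := hK.pos x ⟨hx.1.le, hx.2.le⟩
        positivity) hΦF
  have hIle1 : I ≤ 1 := hint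
  refine ⟨?_, le_trans (ENNReal.ofReal_le_ofReal hint) (by simp)⟩
  by_contra hcon
  rw [not_le] at hcon
  -- pick I' > I with [0, I'] ⊆ Ico0 T
  obtain ⟨I', hII', hI'sub⟩ : ∃ I', I < I' ∧ Icc 0 I' ⊆ Ico0 T := by
    rcases eq_or_ne T ⊤ with hT | hT
    · exact ⟨I + 1, by linarith, fun τ hτ => ⟨hτ.1, hT ▸ ENNReal.ofReal_lt_top⟩⟩
    · have hlt : I < T.toReal := (ENNReal.ofReal_lt_iff_lt_toReal hIpos.le hT).mp hcon
      refine ⟨(I + T.toReal)/2, by linarith, fun τ hτ => ⟨hτ.1, ?_⟩⟩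
      calc ENNReal.ofReal τ ≤ ENNReal.ofReal ((I + T.toReal)/2) :=
            ENNReal.ofReal_le_ofReal hτ.2
        _ < ENNReal.ofReal T.toReal := by
            rw [ENNReal.ofReal_lt_ofReal_iff (by linarith)]; linarith
        _ = T := ENNReal.ofReal_toReal hT
  have hI'pos : 0 < I' := lt_trans hIpos hII'
  set R : Set (ℝ × ℝ) := Icc 0 I' ×ˢ Icc (0:ℝ) 1 with hRdef
  have hRsub : R ⊆ Ico0 T ×ˢ Icc (0:ℝ) 1 := prod_mono hI'sub subset_rfl
  have hQR : ContDiffOn ℝ 1 (Function.uncurry Q) R := hsol.reg.mono hRsub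
  have hUD : UniqueDiffOn ℝ R := by
    apply uniqueDiffOn_convex ((convex_Icc _ _).prod (convex_Icc _ _))
    rw [interior_prod_eq, interior_Icc, interior_Icc]
    exact ⟨(I'/2, 1/2), ⟨by constructor <;> [positivity; linarith],
      by constructor <;> norm_num⟩⟩
  set D := fderivWithin ℝ (Function.uncurry Q) R with hDdef
  have hDcont : ContinuousOn D R := hQR.continuousOn_fderivWithin hUD le_rfl
  have hslice : ∀ p ∈ R, HasFDerivWithinAt (Function.uncurry Q) (D p) R p :=
    fun p hp => ((hQR.differentiableOn one_ne_zero) p hp).hasFDerivWithinAt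
  -- slice derivatives
  have hTauD : ∀ τ ∈ Icc (0:ℝ) I', ∀ η ∈ Icc (0:ℝ) 1,
      HasDerivWithinAt (fun s => Q s η) (D (τ,η) (1,0)) (Icc 0 I') τ := by
    intro τ hτ η hη
    have hline : HasDerivWithinAt (fun s : ℝ => ((s, η) : ℝ × ℝ)) ((1:ℝ), (0:ℝ)) (Icc 0 I') τ :=
      ((hasDerivAt_id τ).prodMk (hasDerivAt_const τ η)).hasDerivWithinAt
    have h := (hslice (τ,η) ⟨hτ, hη⟩).comp_hasDerivWithinAt τ hline (fun s hs => (⟨hs, hη⟩ : ((s, η) : ℝ × ℝ) ∈ R))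
    simpa [Function.comp_def, Function.uncurry] using h
  have hEtaD : ∀ τ ∈ Icc (0:ℝ) I', ∀ η ∈ Icc (0:ℝ) 1,
      HasDerivWithinAt (fun x => Q τ x) (D (τ,η) (0,1)) (Icc 0 1) η := by
    intro τ hτ η hη
    have hline : HasDerivWithinAt (fun x : ℝ => ((τ, x) : ℝ × ℝ)) ((0:ℝ), (1:ℝ)) (Icc 0 1) η :=
      ((hasDerivAt_const η τ).prodMk (hasDerivAt_id η)).hasDerivWithinAt
    have h := (hslice (τ,η) ⟨hτ, hη⟩).comp_hasDerivWithinAt η hline (fun x hx => ⟨hτ, hx⟩)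
    simpa [Function.comp_def, Function.uncurry] using h
  have hpdEta : ∀ τ ∈ Icc (0:ℝ) I', ∀ η ∈ Icc (0:ℝ) 1, pdEta Q τ η = D (τ,η) (0,1) :=
    fun τ hτ η hη => (hEtaD τ hτ η hη).derivWithin (uniqueDiffOn_Icc_zero_one η hη)
  have hIccMem : ∀ t : ℝ, t ∈ Ico (0:ℝ) I' → Icc (0:ℝ) I' ∈ 𝓝[Ici t] t := by
    intro t ht
    exact mem_nhdsWithin.mpr ⟨Iio I', isOpen_Iio, ht.2,
      fun y hy => ⟨le_trans ht.1 hy.2, hy.1.le⟩⟩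
  have hpdTau : ∀ τ ∈ Ico (0:ℝ) I', ∀ η ∈ Icc (0:ℝ) 1, pdTau Q τ η = D (τ,η) (1,0) := by
    intro τ hτ η hη
    have h1 : HasDerivWithinAt (fun s => Q s η) (D (τ,η) (1,0)) (Ici 0) τ := by
      apply (hTauD τ ⟨hτ.1, hτ.2.le⟩ η hη).mono_of_mem_nhdsWithin
      exact mem_nhdsWithin.mpr ⟨Iio I', isOpen_Iio, hτ.2, fun y hy => ⟨hy.2, hy.1.le⟩⟩
    exact h1.derivWithin (uniqueDiffOn_Ici 0 τ hτ.1)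
  have hQcont : ContinuousOn (Function.uncurry Q) R := hQR.continuousOn
  -- PDE extended by continuity to all η ∈ [0,1], for τ ∈ [0, I]
  have hIsub' : Icc (0:ℝ) I ⊆ Icc (0:ℝ) I' := Icc_subset_Icc le_rfl hII'.le
  have hpde : ∀ τ ∈ Icc (0:ℝ) I, ∀ η ∈ Icc (0:ℝ) 1,
      D (τ,η) (1,0) + D (τ,η) (0,1) = 1 / N τ + K (Q τ η) := by
    intro τ hτ
    have hτI' : τ ∈ Ico (0:ℝ) I' := ⟨hτ.1, lt_of_le_of_lt hτ.2 hII'⟩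
    have hτT : τ ∈ Ico0 T := hI'sub ⟨hτ.1, hτI'.2.le⟩
    have hmapc : ContinuousOn (fun η : ℝ => ((τ, η) : ℝ × ℝ)) (Icc 0 1) :=
      (continuous_const.prodMk continuous_id).continuousOn
    have hmaps : MapsTo (fun η : ℝ => ((τ, η) : ℝ × ℝ)) (Icc 0 1) R :=
      fun η hη => ⟨⟨hτI'.1, hτI'.2.le⟩, hη⟩
    have hDc : ContinuousOn (fun η : ℝ => D (τ, η)) (Icc 0 1) := hDcont.comp hmapc hmaps
    have hf1 : ContinuousOn (fun η : ℝ => D (τ,η) (1,0) + D (τ,η) (0,1)) (Icc 0 1) := by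
      apply ContinuousOn.add
      · exact (ContinuousLinearMap.apply ℝ ℝ ((1:ℝ),(0:ℝ))).continuous.comp_continuousOn hDc
      · exact (ContinuousLinearMap.apply ℝ ℝ ((0:ℝ),(1:ℝ))).continuous.comp_continuousOn hDc
    have hf2 : ContinuousOn (fun η : ℝ => 1 / N τ + K (Q τ η)) (Icc 0 1) :=
      continuousOn_const.add (hKc.comp_continuousOn (hQcont.comp hmapc hmaps))
    refine eqOn_Icc_of_eqOn_Ioo' one_pos hf1 hf2 ?_
    intro η hη
    have hpd := hsol.pde τ hτT η hη
    rwa [hpdTau τ hτI' η (Ioo_subset_Icc_self hη),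
      hpdEta τ ⟨hτI'.1, hτI'.2.le⟩ η (Ioo_subset_Icc_self hη)] at hpd
  -- boundary value Q τ 1 = ΦF via ODE uniqueness
  obtain ⟨C, hC⟩ := hK.bdd1
  have hKdiff : Differentiable ℝ K := hK.smooth.differentiable (by norm_num)
  have hKlip : LipschitzWith C.toNNReal K := by
    apply lipschitzWith_of_nnnorm_deriv_le hKdiff
    intro x
    rw [← NNReal.coe_le_coe, coe_nnnorm, Real.norm_eq_abs, Real.coe_toNNReal']
    exact le_trans (hC x) (le_max_left _ _)
  have hvlip : ∀ _t : ℝ, LipschitzWith C.toNNReal (fun y : ℝ => K y - K ΦF) := by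
    intro t
    apply LipschitzWith.of_dist_le_mul
    intro y y'
    have := hKlip.dist_le_mul y y'
    simpa [Real.dist_eq, sub_sub_sub_cancel_right] using this
  have hone : (1:ℝ) ∈ Icc (0:ℝ) 1 := ⟨zero_le_one, le_rfl⟩
  have hBcont : ContinuousOn (fun t => Q t 1) (Icc 0 I) := by
    apply hQcont.comp ((continuous_id.prodMk continuous_const).continuousOn)
    exact fun t ht => ⟨hIsub' ht, hone⟩
  have hB' : ∀ t ∈ Ico (0:ℝ) I, HasDerivWithinAt (fun t => Q t 1)
      ((fun y : ℝ => K y - K ΦF) (Q t 1)) (Ici t) t := by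
    intro t ht
    have htI' : t ∈ Ico (0:ℝ) I' := ⟨ht.1, lt_trans ht.2 hII'⟩
    have htT : t ∈ Ico0 T := hI'sub ⟨ht.1, htI'.2.le⟩
    have hval : D (t,1) ((1:ℝ),(0:ℝ)) = K (Q t 1) - K ΦF := by
      have h1 := hpde t ⟨ht.1, ht.2.le⟩ 1 hone
      have h2 := hsol.Ndef t htT
      rw [hpdEta t ⟨htI'.1, htI'.2.le⟩ 1 hone] at h2
      linarith
    have hd := (hTauD t ⟨htI'.1, htI'.2.le⟩ 1 hone).mono_of_mem_nhdsWithin (hIccMem t htI')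
    simpa [hval] using hd
  have hg' : ∀ t ∈ Ico (0:ℝ) I, HasDerivWithinAt (fun _ : ℝ => ΦF)
      ((fun y : ℝ => K y - K ΦF) ((fun _ : ℝ => ΦF) t)) (Ici t) t := by
    intro t _
    simpa using (hasDerivWithinAt_const t (Ici t) ΦF)
  have ha : dist (Q 0 1) ((fun _ : ℝ => ΦF) 0) ≤ 0 := by
    rw [hsol.init 1 hone, hsol.init1]
    simp
  have hB : ∀ τ ∈ Icc (0:ℝ) I, Q τ 1 = ΦF := by
    intro τ hτ
    have := dist_le_of_trajectories_ODE hvlip hBcont hB'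
      (continuousOn_const) hg' ha τ hτ
    rw [zero_mul] at this
    exact dist_le_zero.mp this
  -- characteristic g s = Q s s
  have hdiag : ∀ s ∈ Icc (0:ℝ) I, ((s, s) : ℝ × ℝ) ∈ R :=
    fun s hs => ⟨hIsub' hs, ⟨hs.1, le_trans hs.2 hIle1⟩⟩
  have hg0 : ∀ s ∈ Icc (0:ℝ) I, Q s s ∈ Icc 0 ΦF := by
    intro s hs
    have hsT : s ∈ Ico0 T := hI'sub (hIsub' hs)
    have hs1 : s ∈ Icc (0:ℝ) 1 := ⟨hs.1, le_trans hs.2 hIle1⟩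
    have hmono := hsol.mono s hsT
    constructor
    · have := hmono (left_mem_Icc.mpr zero_le_one) hs1 hs.1
      rwa [hsol.bc s hsT] at this
    · have := hmono hs1 hone hs1.2
      rwa [hB s hs] at this
  have hgD : ∀ s ∈ Icc (0:ℝ) I,
      HasDerivWithinAt (fun t => Q t t) (1 / N s + K (Q s s)) (Icc 0 I) s := by
    intro s hs
    have hline : HasDerivWithinAt (fun t : ℝ => ((t, t) : ℝ × ℝ)) ((1:ℝ),(1:ℝ)) (Icc 0 I) s :=
      ((hasDerivAt_id s).prodMk (hasDerivAt_id s)).hasDerivWithinAt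
    have h := HasFDerivWithinAt.comp_hasDerivWithinAt (f := fun t : ℝ => ((t, t) : ℝ × ℝ)) s (hslice _ (hdiag s hs)) hline hdiag
    have hval : D (s,s) ((1:ℝ),(1:ℝ)) = 1 / N s + K (Q s s) := by
      have h11 : ((1:ℝ),(1:ℝ)) = ((1:ℝ),(0:ℝ)) + ((0:ℝ),(1:ℝ)) := by norm_num
      rw [h11, map_add]
      exact hpde s hs s ⟨hs.1, le_trans hs.2 hIle1⟩
    rw [← hval]
    simpa [Function.comp_def, Function.uncurry] using h
  -- h s = F (Q s s), and φ s = h s - s strictly increasing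
  set φ : ℝ → ℝ := fun t => F (Q t t) - t with hφdef
  have hφD : ∀ s ∈ Icc (0:ℝ) I, HasDerivWithinAt φ
      ((1 / K (Q s s)) * (1 / N s + K (Q s s)) - 1) (Icc 0 I) s := by
    intro s hs
    have hmem : Q s s ∈ Ioo (-δ) (ΦF + δ) := hsubU (hg0 s hs)
    exact (HasDerivAt.comp_hasDerivWithinAt (h := fun t => Q t t) s (hF' _ hmem) (hgD s hs)).sub (hasDerivWithinAt_id s _)
  have hφpos : ∀ s ∈ Icc (0:ℝ) I, 0 < (1 / K (Q s s)) * (1 / N s + K (Q s s)) - 1 := by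
    intro s hs
    have hk : 0 < K (Q s s) := hK.pos _ (hg0 s hs)
    have hn : 0 < 1 / N s := by
      have := hsol.Npos s (hI'sub (hIsub' hs))
      positivity
    have : (1 / K (Q s s)) * (1 / N s + K (Q s s)) - 1 = (1 / N s) / K (Q s s) := by
      field_simp
      ring
    rw [this]
    positivity
  have hφcont : ContinuousOn φ (Icc 0 I) := fun s hs => (hφD s hs).continuousWithinAt
  have hφmono : StrictMonoOn φ (Icc 0 I) := by
    apply strictMonoOn_of_deriv_pos (convex_Icc _ _) hφcont
    intro x hx
    rw [interior_Icc] at hx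
    have hD := (hφD x ⟨hx.1.le, hx.2.le⟩).hasDerivAt (Icc_mem_nhds hx.1 hx.2)
    rw [hD.deriv]
    exact hφpos x ⟨hx.1.le, hx.2.le⟩
  have hφ0 : φ 0 = 0 := by
    have h00 : Q 0 0 = 0 := by
      rw [hsol.init 0 (left_mem_Icc.mpr zero_le_one), hsol.init0]
    simp only [hφdef, h00, hFdef]
    simp [intervalIntegral.integral_same]
  have hφI : φ I ≤ 0 := by
    have hQI : Q I I ∈ Icc 0 ΦF := hg0 I ⟨hIpos.le, le_rfl⟩
    have hFmono : MonotoneOn F (Icc 0 ΦF) := by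
      apply monotoneOn_of_deriv_nonneg (convex_Icc _ _)
      · exact fun y hy => ((hF' y (hsubU hy)).continuousAt).continuousWithinAt
      · intro y hy
        rw [interior_Icc] at hy
        exact ((hF' y (hsubU ⟨hy.1.le, hy.2.le⟩)).differentiableAt).differentiableWithinAt
      · intro y hy
        rw [interior_Icc] at hy
        rw [(hF' y (hsubU ⟨hy.1.le, hy.2.le⟩)).deriv]
        have := hK.pos y ⟨hy.1.le, hy.2.le⟩
        positivity
    have hle : F (Q I I) ≤ F ΦF := hFmono hQI (right_mem_Icc.mpr hΦF.le) hQI.2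
    have hFΦ : F ΦF = I := rfl
    simp only [hφdef]
    rw [hFΦ] at hle
    linarith
  have := hφmono (left_mem_Icc.mpr hIpos.le) (right_mem_Icc.mpr hIpos.le) hIpos
  rw [hφ0] at this
  linarith
end
end

section
/- Let (Q,N) be a classical solution of the Q-system on [0,T). Then for every m ∈ C¹([0,Φ_F]) with m(0) = 0 and all τ ∈ (0,T): d/dτ ∫₀¹ m(Q(τ,η)) dη = ( ∫₀¹ m'(Q(τ,η))·K(Q(τ,η)) dη − m(Φ_F) ) + (1/N(τ)) · ∫₀¹ m'(Q(τ,η)) dη. -/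
open Real Set MeasureTheory Filter Topology
open scoped ENNReal

noncomputable section

private lemma eqOn_Icc_helper {f g : ℝ → ℝ} {a b : ℝ} (hab : a < b)
    (hf : ContinuousOn f (Icc a b)) (hg : ContinuousOn g (Icc a b))
    (h : ∀ x ∈ Ioo a b, f x = g x) : ∀ x ∈ Icc a b, f x = g x := by
  intro x hx
  have hx' : x ∈ closure (Ioo a b) := by rwa [closure_Ioo hab.ne]
  have hne : (𝓝[Ioo a b] x).NeBot := mem_closure_iff_nhdsWithin_neBot.1 hx'
  have hf' : Tendsto f (𝓝[Ioo a b] x) (𝓝 (f x)) := (hf x hx).mono Ioo_subset_Icc_self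
  have hg' : Tendsto g (𝓝[Ioo a b] x) (𝓝 (g x)) := (hg x hx).mono Ioo_subset_Icc_self
  have hgf : Tendsto f (𝓝[Ioo a b] x) (𝓝 (g x)) :=
    hg'.congr' (eventually_nhdsWithin_of_forall (fun y hy => (h y hy).symm))
  exact tendsto_nhds_unique hf' hgf

/-- Lemma 6.6: evolution of moments of the solution. -/
theorem stmt19 (ΦF : ℝ) (hΦF : 0 < ΦF) (K : ℝ → ℝ) (hK : KAssump K ΦF)
    (T : ℝ≥0∞) (Qinit : ℝ → ℝ) (Q : ℝ → ℝ → ℝ) (N : ℝ → ℝ)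
    (hsol : IsQSol K ΦF T Qinit Q N)
    (m : ℝ → ℝ) (hm : ContDiffOn ℝ 1 m (Icc 0 ΦF)) (hm0 : m 0 = 0)
    (τ : ℝ) (hτ : 0 < τ) (hτT : ENNReal.ofReal τ < T) :
    HasDerivAt (fun s => ∫ η in (0 : ℝ)..1, m (Q s η))
      ((∫ η in (0 : ℝ)..1, derivWithin m (Icc 0 ΦF) (Q τ η) * K (Q τ η)) - m ΦF
        + (1 / N τ) * ∫ η in (0 : ℝ)..1, derivWithin m (Icc 0 ΦF) (Q τ η)) τ := by
  classical
  obtain ⟨CK, hCK⟩ := hK.bdd1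
  set U : Set ℝ := {s : ℝ | ENNReal.ofReal s < T} with hUdef
  have hUopen : IsOpen U := isOpen_lt ENNReal.continuous_ofReal continuous_const
  have hIU : Ico0 T = Ici 0 ∩ U := by ext s; exact Iff.rfl
  set S : Set (ℝ × ℝ) := Ico0 T ×ˢ Icc (0:ℝ) 1 with hSdef
  set V : Set ℝ := Ioi 0 ∩ U with hVdef
  have hVopen : IsOpen V := isOpen_Ioi.inter hUopen
  have hτV : τ ∈ V := ⟨hτ, hτT⟩
  have hVsub : V ⊆ Ico0 T := fun s hs => ⟨le_of_lt hs.1, hs.2⟩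
  have hτmem : τ ∈ Ico0 T := hVsub hτV
  have hconv : Convex ℝ (Ico0 T) := by
    rw [convex_iff_ordConnected]
    constructor
    intro x hx y hy z hz
    exact ⟨le_trans hx.1 hz.1, lt_of_le_of_lt (ENNReal.ofReal_le_ofReal hz.2) hy.2⟩
  have hud1 : UniqueDiffOn ℝ (Ico0 T) :=
    uniqueDiffOn_convex hconv ⟨τ, interior_maximal hVsub hVopen hτV⟩
  have hudIcc : UniqueDiffOn ℝ (Icc (0:ℝ) 1) := uniqueDiffOn_Icc zero_lt_one
  have hud : UniqueDiffOn ℝ S := hud1.prod hudIcc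
  set D : ℝ × ℝ → (ℝ × ℝ →L[ℝ] ℝ) := fun p => fderivWithin ℝ (Function.uncurry Q) S p
    with hDdef
  have hDiff : ∀ p ∈ S, HasFDerivWithinAt (Function.uncurry Q) (D p) S p := fun p hp =>
    ((hsol.reg.differentiableOn one_ne_zero) p hp).hasFDerivWithinAt
  have hDcont : ContinuousOn D S := hsol.reg.continuousOn_fderivWithin hud le_rfl
  have hQcont : ContinuousOn (Function.uncurry Q) S := hsol.reg.continuousOn
  -- partial derivatives as applications of the full derivative
  have hEta : ∀ p ∈ S, HasDerivWithinAt (fun x => Q p.1 x)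
      (D p (((0:ℝ),(1:ℝ)))) (Icc 0 1) p.2 := by
    intro p hp
    have hin : HasDerivWithinAt (fun x : ℝ => ((p.1, x) : ℝ × ℝ)) (((0:ℝ),(1:ℝ)))
        (Icc 0 1) p.2 :=
      ((hasDerivAt_const p.2 p.1).prodMk (hasDerivAt_id p.2)).hasDerivWithinAt
    have hmap : MapsTo (fun x : ℝ => ((p.1, x) : ℝ × ℝ)) (Icc 0 1) S := fun x hx => ⟨hp.1, hx⟩
    exact (hDiff p hp).comp_hasDerivWithinAt p.2 hin hmap
  have hTau0 : ∀ p ∈ S, HasDerivWithinAt (fun s => Q s p.2)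
      (D p (((1:ℝ),(0:ℝ)))) (Ico0 T) p.1 := by
    intro p hp
    have hin : HasDerivWithinAt (fun s : ℝ => ((s, p.2) : ℝ × ℝ)) (((1:ℝ),(0:ℝ)))
        (Ico0 T) p.1 :=
      ((hasDerivAt_id p.1).prodMk (hasDerivAt_const p.1 p.2)).hasDerivWithinAt
    have hmap : MapsTo (fun s : ℝ => ((s, p.2) : ℝ × ℝ)) (Ico0 T) S := fun s hs => ⟨hs, hp.2⟩
    exact (hDiff p hp).comp_hasDerivWithinAt p.1 hin hmap
  have hTau : ∀ p ∈ S, HasDerivWithinAt (fun s => Q s p.2)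
      (D p (((1:ℝ),(0:ℝ)))) (Ici 0) p.1 := by
    intro p hp
    have h1 := hTau0 p hp
    rw [hIU] at h1
    exact (hasDerivWithinAt_inter (hUopen.mem_nhds hp.1.2)).1 h1
  have hpdTau : ∀ p ∈ S, pdTau Q p.1 p.2 = D p (((1:ℝ),(0:ℝ))) := fun p hp =>
    (hTau p hp).derivWithin (uniqueDiffOn_Ici 0 p.1 hp.1.1)
  have hpdEta : ∀ p ∈ S, pdEta Q p.1 p.2 = D p (((0:ℝ),(1:ℝ))) := fun p hp =>
    (hEta p hp).derivWithin (hudIcc p.2 hp.2)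
  have hG1cont : ContinuousOn (fun p => D p (((1:ℝ),(0:ℝ)))) S :=
    hDcont.clm_apply continuousOn_const
  have hG2cont : ContinuousOn (fun p => D p (((0:ℝ),(1:ℝ)))) S :=
    hDcont.clm_apply continuousOn_const
  have hsliceτ : ∀ s ∈ Ico0 T, ContinuousOn (fun η => Q s η) (Icc 0 1) := by
    intro s hs
    exact hQcont.comp (Continuous.continuousOn (continuous_const.prodMk continuous_id)) (fun η hη => ⟨hs, hη⟩)
  have hsliceη : ContinuousOn (fun s => Q s 1) (Ico0 T) :=
    hQcont.comp (Continuous.continuousOn (continuous_id.prodMk continuous_const))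
      (fun s hs => ⟨hs, ⟨zero_le_one, le_refl 1⟩⟩)
  -- PDE extended to the closed square
  have hPDE : ∀ p ∈ S, D p (((1:ℝ),(0:ℝ))) + D p (((0:ℝ),(1:ℝ)))
      = 1 / N p.1 + K (Q p.1 p.2) := by
    rintro ⟨s, η⟩ ⟨hs, hη⟩
    have hmapS : ∀ x ∈ Icc (0:ℝ) 1, ((s,x) : ℝ × ℝ) ∈ S := fun x hx => ⟨hs, hx⟩
    have hc : ContinuousOn (fun η : ℝ => ((s,η) : ℝ × ℝ)) (Icc 0 1) :=
      Continuous.continuousOn (continuous_const.prodMk continuous_id)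
    have hcont1 : ContinuousOn
        (fun η => D ((s,η)) (((1:ℝ),(0:ℝ))) + D ((s,η)) (((0:ℝ),(1:ℝ)))) (Icc 0 1) :=
      (hG1cont.comp hc hmapS).add (hG2cont.comp hc hmapS)
    have hcont2 : ContinuousOn (fun η => 1 / N s + K (Q s η)) (Icc 0 1) :=
      continuousOn_const.add (hK.smooth.continuous.comp_continuousOn (hsliceτ s hs))
    exact eqOn_Icc_helper zero_lt_one hcont1 hcont2 (fun x hx => by
      have h := hsol.pde s hs x hx
      have h1 := hpdTau (s,x) ⟨hs, Ioo_subset_Icc_self hx⟩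
      have h2 := hpdEta (s,x) ⟨hs, Ioo_subset_Icc_self hx⟩
      simp only at h1 h2
      rw [← h1, ← h2]
      exact h) η hη
  -- the right boundary value stays at ΦF
  have hQ1 : ∀ s ∈ Ico0 T, Q s 1 = ΦF := by
    intro s hs
    have hKd : Differentiable ℝ K := hK.smooth.differentiable (by norm_num)
    have hlip : LipschitzWith ‖CK‖₊ (fun x => K x - K ΦF) := by
      apply lipschitzWith_of_nnnorm_deriv_le (hKd.sub_const _)
      intro x
      have h1 : ‖deriv (fun x => K x - K ΦF) x‖ ≤ ‖CK‖ := by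
        rw [deriv_sub_const]
        exact le_trans (by simpa [Real.norm_eq_abs] using hCK x) (le_abs_self CK)
      exact h1
    have hsub : Icc (0:ℝ) s ⊆ Ico0 T := fun t ht =>
      ⟨ht.1, lt_of_le_of_lt (ENNReal.ofReal_le_ofReal ht.2) hs.2⟩
    have hf' : ∀ t ∈ Ico (0:ℝ) s,
        HasDerivWithinAt (fun s => Q s 1) (K (Q t 1) - K ΦF) (Ici t) t := by
      intro t ht
      have htmem : t ∈ Ico0 T := hsub ⟨ht.1, le_of_lt ht.2⟩
      have htS : ((t,(1:ℝ)) : ℝ × ℝ) ∈ S := ⟨htmem, ⟨zero_le_one, le_refl 1⟩⟩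
      have h1 := hTau (t,1) htS
      have hval : D ((t,(1:ℝ))) (((1:ℝ),(0:ℝ))) = K (Q t 1) - K ΦF := by
        have h2 := hPDE (t,1) htS
        have h3 := hsol.Ndef t htmem
        have h4 := hpdEta (t,1) htS
        simp only at h2 h3 h4
        rw [h4] at h3
        linarith
      rw [hval] at h1
      exact h1.mono (Ici_subset_Ici.2 ht.1)
    have hfc : ContinuousOn (fun s => Q s 1) (Icc 0 s) := hsliceη.mono hsub
    have hg' : ∀ t ∈ Ico (0:ℝ) s,
        HasDerivWithinAt (fun _ : ℝ => ΦF) (K ΦF - K ΦF) (Ici t) t := by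
      intro t ht
      simpa using (hasDerivWithinAt_const t (Ici t) ΦF)
    have ha : Q 0 1 = ΦF := by
      rw [hsol.init 1 ⟨zero_le_one, le_refl 1⟩]
      exact hsol.init1
    have := ODE_solution_unique (v := fun _ x => K x - K ΦF)
      (f := fun s => Q s 1) (g := fun _ => ΦF) (fun _ => hlip) hfc hf'
      continuousOn_const hg' ha
    exact this (right_mem_Icc.2 hs.1)
  -- range of Q
  have hQmem : ∀ s ∈ Ico0 T, ∀ η ∈ Icc (0:ℝ) 1, Q s η ∈ Icc 0 ΦF := by
    intro s hs η hη
    have h0 : Q s 0 ≤ Q s η := hsol.mono s hs ⟨le_refl 0, zero_le_one⟩ hη hη.1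
    have h1 : Q s η ≤ Q s 1 := hsol.mono s hs hη ⟨zero_le_one, le_refl 1⟩ hη.2
    rw [hsol.bc s hs] at h0
    rw [hQ1 s hs] at h1
    exact ⟨h0, h1⟩
  -- bounds
  obtain ⟨ε, hε, hball⟩ := Metric.isOpen_iff.1 hVopen τ hτV
  have hε2 : 0 < ε/2 := by linarith
  have hbb : Metric.ball τ (ε/2) ⊆ Metric.ball τ ε := Metric.ball_subset_ball (by linarith)
  have hcb : Metric.closedBall τ (ε/2) ⊆ V :=
    (Metric.closedBall_subset_ball (by linarith)).trans hball
  have hm' : ContinuousOn (derivWithin m (Icc 0 ΦF)) (Icc 0 ΦF) :=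
    hm.continuousOn_derivWithin (uniqueDiffOn_Icc hΦF) le_rfl
  obtain ⟨Cm, hCm⟩ := isCompact_Icc.exists_bound_of_continuousOn hm'
  have hKcS : (Metric.closedBall τ (ε/2) ×ˢ Icc (0:ℝ) 1 : Set (ℝ × ℝ)) ⊆ S :=
    fun p hp => ⟨hVsub (hcb hp.1), hp.2⟩
  obtain ⟨CG, hCG⟩ := ((isCompact_closedBall τ (ε/2)).prod
    isCompact_Icc).exists_bound_of_continuousOn (hG1cont.mono hKcS)
  set F' : ℝ → ℝ → ℝ :=
    fun x t => derivWithin m (Icc 0 ΦF) (Q x t) * D ((x,t)) (((1:ℝ),(0:ℝ))) with hF'def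
  have hIoc : Set.uIoc (0:ℝ) 1 = Set.Ioc 0 1 := uIoc_of_le zero_le_one
  have hcomp : ∀ x ∈ Metric.ball τ (ε/2), ∀ t ∈ Icc (0:ℝ) 1,
      HasDerivAt (fun x => m (Q x t)) (F' x t) x := by
    intro x hx t ht
    have hxV : x ∈ V := hball (hbb hx)
    have hxm : x ∈ Ico0 T := hVsub hxV
    have hxS : ((x,t) : ℝ × ℝ) ∈ S := ⟨hxm, ht⟩
    have hin : HasDerivWithinAt (fun s => Q s t) (D ((x,t)) (((1:ℝ),(0:ℝ)))) (Ico0 T) x :=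
      hTau0 (x,t) hxS
    have hout : HasDerivWithinAt m (derivWithin m (Icc 0 ΦF) (Q x t)) (Icc 0 ΦF) (Q x t) :=
      ((hm.differentiableOn one_ne_zero) _ (hQmem x hxm t ht)).hasDerivWithinAt
    have hmap : MapsTo (fun s => Q s t) (Ico0 T) (Icc 0 ΦF) := fun s hs => hQmem s hs t ht
    have hc := hout.comp x hin hmap
    have hnh : Ico0 T ∈ 𝓝 x := mem_of_superset (hVopen.mem_nhds hxV) hVsub
    exact hc.hasDerivAt hnh
  have hmcont : ∀ x ∈ Ico0 T, ContinuousOn (fun t => m (Q x t)) (Icc 0 1) := fun x hx =>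
    hm.continuousOn.comp (hsliceτ x hx) (fun t ht => hQmem x hx t ht)
  have ciint : ∀ {u : ℝ → ℝ}, ContinuousOn u (Icc 0 1) → IntervalIntegrable u volume 0 1 := by
    intro u hu
    apply ContinuousOn.intervalIntegrable
    rwa [uIcc_of_le zero_le_one]
  have hmeas : ∀ᶠ x in 𝓝 τ, AEStronglyMeasurable (fun t => m (Q x t))
      (volume.restrict (Set.uIoc (0:ℝ) 1)) := by
    filter_upwards [hVopen.mem_nhds hτV] with x hx
    rw [hIoc]
    exact ((hmcont x (hVsub hx)).mono Ioc_subset_Icc_self).aestronglyMeasurable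
      measurableSet_Ioc
  have hint : IntervalIntegrable (fun t => m (Q τ t)) volume 0 1 := ciint (hmcont τ hτmem)
  have hA : ContinuousOn (fun η => derivWithin m (Icc 0 ΦF) (Q τ η)) (Icc 0 1) :=
    hm'.comp (hsliceτ τ hτmem) (fun t ht => hQmem τ hτmem t ht)
  have hcτ : ContinuousOn (fun t : ℝ => ((τ,t) : ℝ × ℝ)) (Icc 0 1) :=
    Continuous.continuousOn (continuous_const.prodMk continuous_id)
  have hmapτ : ∀ t ∈ Icc (0:ℝ) 1, ((τ,t) : ℝ × ℝ) ∈ S := fun t ht => ⟨hτmem, ht⟩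
  have hCc : ContinuousOn (fun t => D ((τ,t)) (((0:ℝ),(1:ℝ)))) (Icc 0 1) :=
    hG2cont.comp hcτ hmapτ
  have hF'τcont : ContinuousOn (F' τ) (Icc 0 1) :=
    hA.mul (hG1cont.comp hcτ hmapτ)
  have hmeas' : AEStronglyMeasurable (F' τ) (volume.restrict (Set.uIoc (0:ℝ) 1)) := by
    rw [hIoc]
    exact (hF'τcont.mono Ioc_subset_Icc_self).aestronglyMeasurable measurableSet_Ioc
  have hbound : ∀ᵐ t ∂volume, t ∈ Set.uIoc (0:ℝ) 1 →
      ∀ x ∈ Metric.ball τ (ε/2), ‖F' x t‖ ≤ Cm * CG := by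
    refine Filter.Eventually.of_forall ?_
    intro t ht x hx
    rw [hIoc] at ht
    have ht' : t ∈ Icc (0:ℝ) 1 := Ioc_subset_Icc_self ht
    have hxm : x ∈ Ico0 T := hVsub (hball (hbb hx))
    have h1 : ‖derivWithin m (Icc 0 ΦF) (Q x t)‖ ≤ Cm := hCm _ (hQmem x hxm t ht')
    have h2 : ‖D ((x,t)) (((1:ℝ),(0:ℝ)))‖ ≤ CG :=
      hCG (x,t) ⟨Metric.ball_subset_closedBall hx, ht'⟩
    calc ‖F' x t‖ = ‖derivWithin m (Icc 0 ΦF) (Q x t)‖ * ‖D ((x,t)) (((1:ℝ),(0:ℝ)))‖ :=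
          norm_mul _ _
      _ ≤ Cm * CG := mul_le_mul h1 h2 (norm_nonneg _) (le_trans (norm_nonneg _) h1)
  have hbint : IntervalIntegrable (fun _ : ℝ => Cm * CG) volume 0 1 := intervalIntegrable_const
  have hdiff : ∀ᵐ t ∂volume, t ∈ Set.uIoc (0:ℝ) 1 →
      ∀ x ∈ Metric.ball τ (ε/2), HasDerivAt (fun x => m (Q x t)) (F' x t) x := by
    refine Filter.Eventually.of_forall ?_
    intro t ht x hx
    rw [hIoc] at ht
    exact hcomp x hx t (Ioc_subset_Icc_self ht)
  obtain ⟨-, hmain⟩ := intervalIntegral.hasDerivAt_integral_of_dominated_loc_of_deriv_le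
    (Metric.ball_mem_nhds τ hε2) hmeas hint hmeas' hbound hbint hdiff
  -- fundamental theorem of calculus piece
  have hAC : ∀ η ∈ Icc (0:ℝ) 1, HasDerivWithinAt (fun η => m (Q τ η))
      (derivWithin m (Icc 0 ΦF) (Q τ η) * D ((τ,η)) (((0:ℝ),(1:ℝ)))) (Icc 0 1) η := by
    intro η hη
    have hS : ((τ,η) : ℝ × ℝ) ∈ S := ⟨hτmem, hη⟩
    have hin := hEta (τ,η) hS
    have hout : HasDerivWithinAt m (derivWithin m (Icc 0 ΦF) (Q τ η)) (Icc 0 ΦF) (Q τ η) :=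
      ((hm.differentiableOn one_ne_zero) _ (hQmem τ hτmem η hη)).hasDerivWithinAt
    exact hout.comp η hin (fun x hx => hQmem τ hτmem x hx)
  have hFTC : (∫ η in (0:ℝ)..1,
      derivWithin m (Icc 0 ΦF) (Q τ η) * D ((τ,η)) (((0:ℝ),(1:ℝ)))) = m ΦF := by
    have heq := intervalIntegral.integral_eq_sub_of_hasDeriv_right_of_le zero_le_one
      (hmcont τ hτmem)
      (fun x hx => (hAC x (Ioo_subset_Icc_self hx)).mono_of_mem_nhdsWithin
        (mem_nhdsWithin.2 ⟨Iio 1, isOpen_Iio, hx.2,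
          fun z hz => ⟨le_of_lt (lt_trans hx.1 hz.2), le_of_lt hz.1⟩⟩))
      (ciint (hA.mul hCc))
    rw [heq, hsol.bc τ hτmem, hQ1 τ hτmem, hm0, sub_zero]
  -- algebraic identity for the integrand
  have hsplit : ∀ η ∈ Icc (0:ℝ) 1, F' τ η =
      derivWithin m (Icc 0 ΦF) (Q τ η) * K (Q τ η)
      + (1 / N τ) * derivWithin m (Icc 0 ΦF) (Q τ η)
      - derivWithin m (Icc 0 ΦF) (Q τ η) * D ((τ,η)) (((0:ℝ),(1:ℝ))) := by
    intro η hη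
    have h := hPDE (τ,η) ⟨hτmem, hη⟩
    simp only at h
    have hD : D ((τ,η)) (((1:ℝ),(0:ℝ)))
        = 1 / N τ + K (Q τ η) - D ((τ,η)) (((0:ℝ),(1:ℝ))) := by linarith
    simp only [hF'def]
    rw [hD]
    ring
  have hval : (∫ t in (0:ℝ)..1, F' τ t)
      = (∫ η in (0:ℝ)..1, derivWithin m (Icc 0 ΦF) (Q τ η) * K (Q τ η)) - m ΦF
        + (1 / N τ) * ∫ η in (0:ℝ)..1, derivWithin m (Icc 0 ΦF) (Q τ η) := by
    have h1 : (∫ t in (0:ℝ)..1, F' τ t) = ∫ η in (0:ℝ)..1,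
        (derivWithin m (Icc 0 ΦF) (Q τ η) * K (Q τ η)
         + (1 / N τ) * derivWithin m (Icc 0 ΦF) (Q τ η)
         - derivWithin m (Icc 0 ΦF) (Q τ η) * D ((τ,η)) (((0:ℝ),(1:ℝ)))) := by
      apply intervalIntegral.integral_congr
      intro η hη
      rw [uIcc_of_le zero_le_one] at hη
      exact hsplit η hη
    have hB : ContinuousOn (fun η => K (Q τ η)) (Icc 0 1) :=
      hK.smooth.continuous.comp_continuousOn (hsliceτ τ hτmem)
    have hiAB : IntervalIntegrable
        (fun η => derivWithin m (Icc 0 ΦF) (Q τ η) * K (Q τ η)) volume 0 1 :=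
      ciint (hA.mul hB)
    have hiAc : IntervalIntegrable
        (fun η => (1 / N τ) * derivWithin m (Icc 0 ΦF) (Q τ η)) volume 0 1 :=
      ciint (continuousOn_const.mul hA)
    have hiAC : IntervalIntegrable
        (fun η => derivWithin m (Icc 0 ΦF) (Q τ η) * D ((τ,η)) (((0:ℝ),(1:ℝ)))) volume 0 1 :=
      ciint (hA.mul hCc)
    rw [h1, intervalIntegral.integral_sub (hiAB.add hiAc) hiAC,
      intervalIntegral.integral_add hiAB hiAc, intervalIntegral.integral_const_mul, hFTC]
    ring
  exact hval ▸ hmain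
end
end
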